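/- arXiv:1908.08448 — 5 statements merged into one kernel-verified Lean document; each statement's English description precedes it below -/
import Mathlib

section
/- Let S be a nonempty finite set of positive integers all of which are odd, and let n ≥ 1. Then the quadratic trace function Q_n(x) = Tr(∑_{i∈S} x^(2^i+1)) on GaloisField 2 n is balanced if and only if n is odd and |S| is odd. -/
set_option linter.unusedSectionVars false

/-- The quadratic trace function `Q_n(x) = Tr(∑_{i∈S} x^(2^i+1))` on `GaloisField 2 n`. -/
noncomputable def Qtr (S : Finset ℕ) (n : ℕ) (x : GaloisField 2 n) : ZMod 2 :=
  Algebra.trace (ZMod 2) (GaloisField 2 n) (∑ i ∈ S, x ^ (2 ^ i + 1))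

namespace QtrAux

variable (S : Finset ℕ) (n : ℕ) [NeZero n]

local notation "F" => GaloisField 2 n
local notation "Tr" => Algebra.trace (ZMod 2) F

lemma zmod2_cases (b : ZMod 2) : b = 0 ∨ b = 1 := by
  fin_cases b
  · exact Or.inl rfl
  · exact Or.inr rfl

/-- Frobenius as ZMod 2-algebra equiv. -/
noncomputable def frob : F ≃ₐ[ZMod 2] F :=
  AlgEquiv.ofRingEquiv (f := frobeniusEquiv F 2) (fun c => by
    show (algebraMap (ZMod 2) F c) ^ 2 = _
    rw [← map_pow]
    congr 1
    have : c = 0 ∨ c = 1 := zmod2_cases c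
    rcases this with h | h <;> simp [h])

lemma tr_sq (x : F) : Tr (x ^ 2) = Tr x := by
  have := Algebra.trace_eq_of_algEquiv (frob n) x
  simpa [frob, AlgEquiv.ofRingEquiv, frobeniusEquiv_def, frobenius_def] using this

lemma tr_pow (k : ℕ) (x : F) : Tr (x ^ (2 ^ k)) = Tr x := by
  induction k with
  | zero => simp
  | succ k ih =>
    have : x ^ (2 ^ (k + 1)) = (x ^ (2 ^ k)) ^ 2 := by
      rw [← pow_mul, pow_succ]
    rw [this, tr_sq, ih]

/-- The bilinear companion polynomial. -/
noncomputable def beta (x y : F) : F := ∑ i ∈ S, (x ^ (2 ^ i) * y + x * y ^ (2 ^ i))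

noncomputable def Bfm (x y : F) : ZMod 2 := Tr (beta S n x y)

lemma beta_symm (x y : F) : beta S n x y = beta S n y x := by
  unfold beta; apply Finset.sum_congr rfl; intro i _; ring

lemma Bfm_symm (x y : F) : Bfm S n x y = Bfm S n y x := by
  unfold Bfm; rw [beta_symm]

lemma Qtr_add (x y : F) : Qtr S n (x + y) = Qtr S n x + Qtr S n y + Bfm S n x y := by
  unfold Qtr Bfm beta
  rw [← map_add, ← map_add, ← Finset.sum_add_distrib, ← Finset.sum_add_distrib]
  congr 1
  apply Finset.sum_congr rfl
  intro i _
  rw [pow_succ, pow_succ, pow_succ, add_pow_char_pow]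
  ring

lemma Bfm_add_left (x y z : F) : Bfm S n (x + y) z = Bfm S n x z + Bfm S n y z := by
  unfold Bfm beta
  rw [← map_add, ← Finset.sum_add_distrib]
  congr 1
  apply Finset.sum_congr rfl
  intro i _
  rw [add_pow_char_pow]
  ring

lemma Bfm_add_right (x y z : F) : Bfm S n x (y + z) = Bfm S n x y + Bfm S n x z := by
  rw [Bfm_symm, Bfm_add_left, Bfm_symm S n y x, Bfm_symm S n z x]

lemma Bfm_zero_left (z : F) : Bfm S n 0 z = 0 := by
  unfold Bfm beta
  have : ∀ i ∈ S, (0:F) ^ (2 ^ i) * z + 0 * z ^ (2 ^ i) = 0 := by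
    intro i _
    rw [zero_pow (by positivity), zero_mul, zero_mul, add_zero]
  rw [Finset.sum_congr rfl this]
  simp

lemma Bfm_one (x : F) : Bfm S n x 1 = 0 := by
  unfold Bfm beta
  have : ∀ i ∈ S, x ^ (2 ^ i) * 1 + x * 1 ^ (2 ^ i) = x ^ (2 ^ i) + x := by
    intro i _; ring
  rw [Finset.sum_congr rfl this, map_sum]
  have : ∀ i ∈ S, Tr (x ^ (2 ^ i) + x) = 0 := by
    intro i _
    rw [map_add, tr_pow, CharTwo.add_self_eq_zero]
  rw [Finset.sum_congr rfl this, Finset.sum_const, smul_zero]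

lemma char_two_F : (2 : F) = 0 := by
  have : CharP F 2 := inferInstance
  exact_mod_cast (CharP.cast_eq_zero F 2)

lemma sq_sum (f : ℕ → F) : (∑ i ∈ S, f i) ^ 2 = ∑ i ∈ S, (f i) ^ 2 := by
  induction S using Finset.induction with
  | empty => simp
  | insert _ _ h ih => rw [Finset.sum_insert h, Finset.sum_insert h, add_pow_char, ih]

lemma Qtr_frob (x : F) : Qtr S n (x ^ 2) = Qtr S n x := by
  unfold Qtr
  have h : ∑ i ∈ S, (x ^ 2) ^ (2 ^ i + 1) = (∑ i ∈ S, x ^ (2 ^ i + 1)) ^ 2 := by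
    rw [sq_sum]
    apply Finset.sum_congr rfl
    intro i _
    rw [← pow_mul, ← pow_mul]
    ring_nf
  rw [h, tr_sq]

lemma Bfm_frob (x y : F) : Bfm S n (x ^ 2) (y ^ 2) = Bfm S n x y := by
  unfold Bfm
  have h : beta S n (x ^ 2) (y ^ 2) = (beta S n x y) ^ 2 := by
    unfold beta
    rw [sq_sum]
    apply Finset.sum_congr rfl
    intro i _
    rw [add_pow_char]
    rw [mul_pow, mul_pow, ← pow_mul, ← pow_mul, ← pow_mul, ← pow_mul]
    ring_nf
  rw [h, tr_sq]

lemma tr_one : Tr (1 : F) = (n : ZMod 2) := by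
  have h1 : (1 : F) = algebraMap (ZMod 2) F 1 := by simp
  rw [h1, Algebra.trace_algebraMap, GaloisField.finrank 2 (NeZero.ne n)]
  simp

lemma Qtr_one : Qtr S n 1 = (S.card : ZMod 2) * (n : ZMod 2) := by
  unfold Qtr
  simp only [one_pow]
  rw [Finset.sum_const, map_nsmul, tr_one, nsmul_eq_mul]


/-- Artin–Schreier map as a linear map. -/
noncomputable def AS : F →ₗ[ZMod 2] F where
  toFun m := m ^ 2 + m
  map_add' a b := by
    show (a + b) ^ 2 + (a + b) = (a ^ 2 + a) + (b ^ 2 + b)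
    rw [add_pow_char]; ring
  map_smul' c x := by
    rcases zmod2_cases c with h | h <;> simp [h]

lemma AS_ker : LinearMap.ker (AS n) = Submodule.span (ZMod 2) {(1 : F)} := by
  apply le_antisymm
  · intro m hm
    have h : m ^ 2 + m = 0 := hm
    have h2 : m * (m + 1) = 0 := by rw [← h]; ring
    rcases mul_eq_zero.mp h2 with h3 | h3
    · rw [h3]; exact Submodule.zero_mem _
    · have hm1 : m = 1 := by
        have h4 := eq_neg_of_add_eq_zero_left h3
        rwa [CharTwo.neg_eq] at h4
      rw [hm1]
      exact Submodule.mem_span_singleton_self _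
  · rw [Submodule.span_le]
    intro x hx
    rw [Set.mem_singleton_iff] at hx
    subst hx
    show (1 : F) ^ 2 + 1 = 0
    rw [one_pow, CharTwo.add_self_eq_zero]

lemma finrank_F : Module.finrank (ZMod 2) F = n := GaloisField.finrank 2 (NeZero.ne n)

lemma exists_AS (z : F) (hz : Tr z = 0) : ∃ m : F, m ^ 2 + m = z := by
  have hle : LinearMap.range (AS n) ≤ LinearMap.ker (Algebra.trace (ZMod 2) F) := by
    rintro _ ⟨m, rfl⟩
    show Tr ((AS n) m) = 0
    show Tr (m ^ 2 + m) = 0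
    rw [map_add, tr_sq, CharTwo.add_self_eq_zero]
  have h1 : Module.finrank (ZMod 2) (LinearMap.range (AS n)) = n - 1 := by
    have := LinearMap.finrank_range_add_finrank_ker (AS n)
    rw [finrank_F, AS_ker, finrank_span_singleton (one_ne_zero)] at this
    omega
  have h2 : Module.finrank (ZMod 2) (LinearMap.ker (Algebra.trace (ZMod 2) F)) = n - 1 := by
    have := LinearMap.finrank_range_add_finrank_ker (Algebra.trace (ZMod 2) F)
    rw [finrank_F, LinearMap.range_eq_top.mpr (Algebra.trace_surjective (ZMod 2) F),
      finrank_top, Module.finrank_self] at this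
    omega
  have heq : LinearMap.range (AS n) = LinearMap.ker (Algebra.trace (ZMod 2) F) :=
    Submodule.eq_of_le_of_finrank_eq hle (by rw [h1, h2])
  have hz' : z ∈ LinearMap.range (AS n) := by rw [heq]; exact hz
  obtain ⟨m, hm⟩ := hz'
  exact ⟨m, hm⟩

lemma trace_dual_unique (c c' : F) (h : ∀ x, Tr (c * x) = Tr (c' * x)) : c = c' := by
  have hnd := traceForm_nondegenerate (ZMod 2) F
  have : c - c' = 0 := by
    apply hnd.1
    intro y
    rw [Algebra.traceForm_apply, sub_mul, map_sub, h, sub_self]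
  exact sub_eq_zero.mp this

lemma exists_dual (g : F →ₗ[ZMod 2] ZMod 2) : ∃ c : F, ∀ x, Tr (c * x) = g x := by
  have hnd := traceForm_nondegenerate (ZMod 2) F
  let e := (Algebra.traceForm (ZMod 2) F).toDual hnd
  refine ⟨e.symm g, fun x => ?_⟩
  have h2 : e (e.symm g) x = g x := by rw [e.apply_symm_apply]
  rw [LinearMap.BilinForm.toDual_def hnd] at h2
  rw [← Algebra.traceForm_apply]
  exact h2


lemma hn2_of_odd (hn : Odd n) : (n : ZMod 2) = 1 := by
  obtain ⟨k, rfl⟩ := hn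
  push_cast
  rw [show (2 : ZMod 2) = 0 from rfl]
  ring

lemma card2_of_even {m : ℕ} (hm : Even m) : (m : ZMod 2) = 0 := by
  obtain ⟨k, rfl⟩ := hm
  push_cast
  exact CharTwo.add_self_eq_zero _

/-- Key lemma: if `n` is odd and `|S|` is even, `Q` vanishes on the radical. -/
lemma Q_rad_zero (hn : Odd n) (hS : Even S.card) (z : F)
    (hz : ∀ x, Bfm S n x z = 0) : Qtr S n z = 0 := by
  have htr1 : Tr (1 : F) = 1 := by rw [tr_one, hn2_of_odd n hn]
  have hQ1 : Qtr S n 1 = 0 := by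
    rw [Qtr_one, card2_of_even hS, zero_mul]
  -- main claim for trace-zero radical elements
  have key : ∀ w : F, Tr w = 0 → (∀ x, Bfm S n x w = 0) → Qtr S n w = 0 := by
    intro w hw hwB
    obtain ⟨m, hm⟩ := exists_AS n w hw
    -- the linear functional x ↦ B(x, m)
    let g : F →ₗ[ZMod 2] ZMod 2 :=
      { toFun := fun x => Bfm S n x m
        map_add' := fun a b => Bfm_add_left S n a b m
        map_smul' := fun c x => by
          rcases zmod2_cases c with h | h <;>
            simp [h, Bfm_zero_left] }
    obtain ⟨c, hc⟩ := exists_dual n g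
    have hmsq : ∀ x : F, Bfm S n x (m ^ 2) = Bfm S n x m := by
      intro x
      have h0 := hwB x
      rw [← hm, Bfm_add_right] at h0
      rcases zmod2_cases (Bfm S n x (m ^ 2)) with h1 | h1 <;>
        rcases zmod2_cases (Bfm S n x m) with h2 | h2 <;>
          rw [h1, h2] <;> first | rfl | (rw [h1, h2] at h0; simp at h0)
    have hsq : ∀ x : F, Bfm S n (x ^ 2) m = Bfm S n x m := by
      intro x
      rw [← hmsq (x ^ 2), Bfm_frob]
    have hceq : c ^ 2 = c := by
      have huniq : ∀ y : F, Tr (c ^ 2 * y) = Tr (c * y) := by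
        intro y
        obtain ⟨x, hx⟩ : ∃ x : F, x ^ 2 = y :=
          ⟨(frobeniusEquiv F 2).symm y, frobenius_apply_frobeniusEquiv_symm F 2 y⟩
        subst hx
        have e1 : c ^ 2 * x ^ 2 = (c * x) ^ 2 := by ring
        rw [e1, tr_sq]
        have e2 : Tr (c * x) = Bfm S n x m := hc x
        have e3 : Tr (c * x ^ 2) = Bfm S n (x ^ 2) m := hc (x ^ 2)
        rw [e2, e3, hsq]
      exact trace_dual_unique n _ _ huniq
    have hc01 : c = 0 ∨ c = 1 := by
      have h2 : c * (c - 1) = 0 := by rw [mul_sub, mul_one, ← pow_two, hceq, sub_self]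
      rcases mul_eq_zero.mp h2 with h3 | h3
      · exact Or.inl h3
      · exact Or.inr (by linear_combination h3)
    rcases hc01 with hc0 | hc0
    · -- c = 0 : m is in the radical, conclude
      have hmrad : ∀ x, Bfm S n x m = 0 := by
        intro x
        have h := hc x
        rw [hc0, zero_mul, map_zero] at h
        exact h.symm
      have : Qtr S n w = Qtr S n (m ^ 2) + Qtr S n m + Bfm S n (m ^ 2) m := by
        rw [← hm]; exact Qtr_add S n _ _
      rw [this, Qtr_frob, hmrad, CharTwo.add_self_eq_zero, zero_add]
    · -- c = 1 : contradiction with B(1, m) = 0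
      exfalso
      have h1 : Tr (c * 1) = Bfm S n 1 m := hc 1
      rw [hc0, mul_one, htr1, Bfm_symm, Bfm_one] at h1
      exact one_ne_zero h1
  -- reduce the general case to the trace-zero case
  rcases zmod2_cases (Tr z) with h0 | h0
  · exact key z h0 hz
  · have hw : Tr (z + 1) = 0 := by rw [map_add, h0, htr1, CharTwo.add_self_eq_zero]
    have hwB : ∀ x, Bfm S n x (z + 1) = 0 := by
      intro x
      rw [Bfm_add_right, hz, Bfm_one, add_zero]
    have hkey := key (z + 1) hw hwB
    have : Qtr S n z = Qtr S n (z + 1) + Qtr S n 1 + Bfm S n (z + 1) 1 := by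
      have hzz : (z + 1) + 1 = z := by
        rw [add_assoc, CharTwo.add_self_eq_zero, add_zero]
      nth_rewrite 1 [← hzz]
      exact Qtr_add S n _ _
    rw [this, hkey, hQ1, Bfm_one, add_zero, add_zero]


lemma Bfm_self (x : F) : Bfm S n x x = 0 := by
  unfold Bfm beta
  have h : ∀ i ∈ S, x ^ (2 ^ i) * x + x * x ^ (2 ^ i) = 0 := by
    intro i _
    rw [mul_comm]
    exact CharTwo.add_self_eq_zero _
  rw [Finset.sum_congr rfl h]
  simp

/-- The sign character on `ZMod 2`. -/
def eps (t : ZMod 2) : ℤ := if t = 1 then -1 else 1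

lemma eps_add : ∀ a b : ZMod 2, eps (a + b) = eps a * eps b := by decide

lemma eps_zero : eps 0 = 1 := by decide

lemma eps_flip : ∀ b : ZMod 2, eps (b + 1) = - eps b := by decide

section Counting

variable [Fintype (GaloisField 2 n)]

lemma cardF : Fintype.card F = 2 ^ n := by
  have := GaloisField.card 2 n (NeZero.ne n)
  rwa [Nat.card_eq_fintype_card] at this

lemma card_subtype (p : F → Prop) [DecidablePred p] :
    Nat.card {x : F // p x} = (Finset.univ.filter p).card := by
  rw [Nat.card_eq_fintype_card, Fintype.card_subtype]

lemma W_eq : ∑ x : F, eps (Qtr S n x) =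
    (2 ^ n : ℤ) - 2 * (Finset.univ.filter (fun x : F => Qtr S n x = 1)).card := by
  classical
  have h1 : ∀ x : F, eps (Qtr S n x) = if Qtr S n x = 1 then (-1 : ℤ) else 1 := fun x => rfl
  rw [Finset.sum_congr rfl (fun x _ => h1 x), Finset.sum_ite, Finset.sum_const,
    Finset.sum_const]
  have h2 := Finset.card_filter_add_card_filter_not
    (s := (Finset.univ : Finset F)) (p := fun x => Qtr S n x = 1)
  rw [Finset.card_univ, cardF n] at h2
  have h3 : (Finset.univ.filter (fun x : F => ¬ Qtr S n x = 1)).card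
      = 2 ^ n - (Finset.univ.filter (fun x : F => Qtr S n x = 1)).card := by omega
  rw [h3]
  have h4 : (Finset.univ.filter (fun x : F => Qtr S n x = 1)).card ≤ 2 ^ n := by omega
  simp only [nsmul_eq_mul, mul_one, mul_neg_one]
  have h5 : ((2 ^ n - (Finset.univ.filter (fun x : F => Qtr S n x = 1)).card : ℕ) : ℤ)
      = (2 ^ n : ℤ) - (Finset.univ.filter (fun x : F => Qtr S n x = 1)).card := by
    push_cast [h4]
    ring
  rw [h5]
  push_cast
  ring

lemma T_eq (z : F) [Decidable (∀ x : F, Bfm S n x z = 0)] :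
    (∑ x : F, eps (Bfm S n x z)) = if (∀ x : F, Bfm S n x z = 0) then (2 ^ n : ℤ) else 0 := by
  classical
  split_ifs with h
  · rw [Finset.sum_congr rfl (fun x _ => by rw [h x, eps_zero]), Finset.sum_const,
      Finset.card_univ, cardF n]
    simp
  · push_neg at h
    obtain ⟨x₀, hx₀⟩ := h
    have hx1 : Bfm S n x₀ z = 1 := by
      rcases zmod2_cases (Bfm S n x₀ z) with h | h
      · exact absurd h hx₀
      · exact h
    have hre : (∑ x : F, eps (Bfm S n x z)) = ∑ x : F, eps (Bfm S n (x + x₀) z) := by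
      apply Fintype.sum_equiv (Equiv.addRight x₀)
      intro x
      have h5 : x + x₀ + x₀ = x := by rw [add_assoc, CharTwo.add_self_eq_zero, add_zero]
      simp [Equiv.addRight, h5]
    have hneg : ∀ x : F, eps (Bfm S n (x + x₀) z) = - eps (Bfm S n x z) := by
      intro x
      rw [Bfm_add_left, hx1, eps_flip]
    rw [Finset.sum_congr rfl (fun x _ => hneg x), Finset.sum_neg_distrib] at hre
    linarith

lemma Wsq_eq :
    (∑ x : F, eps (Qtr S n x)) * (∑ x : F, eps (Qtr S n x)) =
    ∑ z ∈ Finset.univ.filter (fun z : F => ∀ x : F, Bfm S n x z = 0),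
      eps (Qtr S n z) * 2 ^ n := by
  classical
  rw [Finset.sum_mul_sum]
  have step1 : ∀ x : F, (∑ y : F, eps (Qtr S n x) * eps (Qtr S n y))
      = ∑ z : F, eps (Qtr S n z + Bfm S n x z) := by
    intro x
    rw [show (∑ y : F, eps (Qtr S n x) * eps (Qtr S n y))
        = ∑ y : F, eps (Qtr S n x + Qtr S n y) from
      Finset.sum_congr rfl (fun y _ => (eps_add _ _).symm)]
    apply Fintype.sum_equiv (Equiv.addLeft x)
    intro z
    apply congrArg eps
    show Qtr S n x + Qtr S n z = Qtr S n (x + z) + Bfm S n x (x + z)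
    rw [Qtr_add, Bfm_add_right, Bfm_self]
    linear_combination -(CharTwo.add_self_eq_zero (Bfm S n x z) : _)
  rw [Finset.sum_congr rfl (fun x _ => step1 x), Finset.sum_comm]
  have step2 : ∀ z : F, (∑ x : F, eps (Qtr S n z + Bfm S n x z))
      = eps (Qtr S n z) * ∑ x : F, eps (Bfm S n x z) := by
    intro z
    rw [Finset.mul_sum]
    exact Finset.sum_congr rfl (fun x _ => eps_add _ _)
  rw [Finset.sum_congr rfl (fun z _ => step2 z)]
  have step3 : ∀ z : F, eps (Qtr S n z) * (∑ x : F, eps (Bfm S n x z))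
      = if (∀ x : F, Bfm S n x z = 0) then eps (Qtr S n z) * 2 ^ n else 0 := by
    intro z
    rw [T_eq]
    split_ifs with h
    · rfl
    · rw [mul_zero]
  rw [Finset.sum_congr rfl (fun z _ => step3 z), Finset.sum_ite, Finset.sum_const_zero,
    add_zero]

end Counting


lemma odd_cast2 {m : ℕ} (hm : Odd m) : (m : ZMod 2) = 1 := by
  obtain ⟨k, rfl⟩ := hm
  push_cast
  rw [show (2 : ZMod 2) = 0 from rfl]
  ring

lemma Qtr_zero : Qtr S n 0 = 0 := by
  unfold Qtr
  have h : ∀ i ∈ S, (0 : F) ^ (2 ^ i + 1) = 0 := by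
    intro i _
    exact zero_pow (by positivity)
  rw [Finset.sum_congr rfl h, Finset.sum_const, smul_zero, map_zero]

lemma card_of_odd_odd (hn : Odd n) (hS : Odd S.card) :
    Nat.card {x : F // Qtr S n x = 1} = 2 ^ (n - 1) := by
  classical
  letI : Fintype F := Fintype.ofFinite F
  rw [card_subtype]
  have hQ1 : Qtr S n 1 = 1 := by
    rw [Qtr_one, odd_cast2 hS, hn2_of_odd n hn, one_mul]
  have hflip : ∀ x : F, Qtr S n (x + 1) = Qtr S n x + 1 := by
    intro x
    rw [Qtr_add, Bfm_one, add_zero, hQ1]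
  set A := Finset.univ.filter (fun x : F => Qtr S n x = 1) with hA
  set A0 := Finset.univ.filter (fun x : F => Qtr S n x = 0) with hA0
  have hcards : A.card = A0.card := by
    refine Finset.card_bij' (fun x _ => x + 1) (fun x _ => x + 1) ?_ ?_ ?_ ?_
    · intro a ha
      rw [hA, Finset.mem_filter] at ha
      rw [hA0, Finset.mem_filter]
      refine ⟨Finset.mem_univ _, ?_⟩
      rw [hflip, ha.2, CharTwo.add_self_eq_zero]
    · intro a ha
      rw [hA0, Finset.mem_filter] at ha
      rw [hA, Finset.mem_filter]
      refine ⟨Finset.mem_univ _, ?_⟩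
      rw [hflip, ha.2, zero_add]
    · intro a _
      show a + 1 + 1 = a
      rw [add_assoc, CharTwo.add_self_eq_zero, add_zero]
    · intro a _
      show a + 1 + 1 = a
      rw [add_assoc, CharTwo.add_self_eq_zero, add_zero]
  have hA0' : A0 = Finset.univ.filter (fun x : F => ¬ Qtr S n x = 1) := by
    apply Finset.filter_congr
    intro x _
    rcases zmod2_cases (Qtr S n x) with h | h <;> simp [h]
  have hsum : A.card + A0.card = 2 ^ n := by
    rw [hA0']
    have := Finset.card_filter_add_card_filter_not
      (s := (Finset.univ : Finset F)) (p := fun x : F => Qtr S n x = 1)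
    rwa [Finset.card_univ, cardF n] at this
  have hn1 : 1 ≤ n := Nat.one_le_iff_ne_zero.mpr (NeZero.ne n)
  have h2n : 2 ^ n = 2 ^ (n - 1) * 2 := by
    have h1 : n - 1 + 1 = n := by omega
    conv_lhs => rw [← h1]
    rw [pow_succ]
  have hgoal : A.card = 2 ^ (n - 1) := by omega
  convert hgoal using 2

lemma card_ne_of_even (hOdd : ∀ i ∈ S, Odd i) (hne : ¬ Odd n) :
    Nat.card {x : F // Qtr S n x = 1} ≠ 2 ^ (n - 1) := by
  classical
  letI : Fintype F := Fintype.ofFinite F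
  have h4 : ∀ k : ℕ, 4 ^ k % 3 = 1 := by
    intro k
    rw [Nat.pow_mod]
    simp
  have hdvd3 : 3 ∣ Fintype.card Fˣ := by
    rw [Fintype.card_units, cardF n]
    obtain ⟨k, hk⟩ := Nat.not_odd_iff_even.mp hne
    have h2 : 2 ^ n = 4 ^ k := by
      rw [hk, ← two_mul, pow_mul]
      norm_num
    have h5 := h4 k
    have h6 : 0 < 4 ^ k := by positivity
    omega
  haveI : Fact (Nat.Prime 3) := ⟨by norm_num⟩
  obtain ⟨ω, hω⟩ := exists_prime_orderOf_dvd_card 3 hdvd3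
  have hω3 : ω ^ 3 = 1 := by rw [← hω]; exact pow_orderOf_eq_one ω
  have hωne : ((ω : Fˣ) : F) ≠ 1 := by
    intro h
    have : (ω : Fˣ) = 1 := Units.ext h
    rw [this, orderOf_one] at hω
    norm_num at hω
  have hinv : ∀ v : F, v ^ 3 = 1 → ∀ x : F, Qtr S n (v * x) = Qtr S n x := by
    intro v hv x
    unfold Qtr
    congr 1
    apply Finset.sum_congr rfl
    intro i hi
    have hdiv : 3 ∣ 2 ^ i + 1 := by
      obtain ⟨j, hj⟩ := hOdd i hi
      have h2 : 2 ^ i = 2 * 4 ^ j := by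
        rw [hj, pow_succ, pow_mul]
        norm_num
        ring
      have h5 := h4 j
      have h6 : 0 < 4 ^ j := by positivity
      omega
    obtain ⟨t, ht⟩ := hdiv
    rw [mul_pow, ht, pow_mul, hv, one_pow, one_mul]
  set G := Subgroup.zpowers ω with hG
  have hG3 : ∀ u : G, (u : Fˣ) ^ 3 = 1 := by
    intro u
    obtain ⟨k, hk⟩ := u.2
    rw [← hk, ← zpow_natCast, ← zpow_mul, mul_comm, zpow_mul, zpow_natCast, hω3, one_zpow]
  have hG3' : ∀ u : G, ((u : Fˣ) : F) ^ 3 = 1 := by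
    intro u
    have h2 := congrArg (fun w : Fˣ => (w : F)) (hG3 u)
    simpa using h2
  letI : SMul G {x : F // Qtr S n x = 1} :=
    ⟨fun u x => ⟨((u : Fˣ) : F) * x, by rw [hinv _ (hG3' u)]; exact x.2⟩⟩
  letI : MulAction G {x : F // Qtr S n x = 1} :=
    { one_smul := fun x => Subtype.ext (by
        show ((((1 : G) : Fˣ)) : F) * x = x
        simp
        )
      mul_smul := fun u v x => Subtype.ext (by
        show (((u * v : G) : Fˣ) : F) * x = ((u : Fˣ) : F) * (((v : Fˣ) : F) * (x : F))
        push_cast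
        ring) }
  have hPG : IsPGroup 3 G := by
    intro u
    refine ⟨1, ?_⟩
    rw [pow_one]
    apply Subtype.ext
    push_cast
    exact hG3 u
  have hmod := IsPGroup.card_modEq_card_fixedPoints hPG {x : F // Qtr S n x = 1}
  have hfix : IsEmpty (MulAction.fixedPoints G {x : F // Qtr S n x = 1}) := by
    rw [isEmpty_iff]
    rintro ⟨⟨x, hx⟩, hy⟩
    have h1 := hy (⟨ω, Subgroup.mem_zpowers ω⟩ : G)
    have h2 : ((ω : Fˣ) : F) * x = x := congrArg Subtype.val h1
    have h3 : (((ω : Fˣ) : F) - 1) * x = 0 := by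
      rw [sub_mul, one_mul, h2, sub_self]
    rcases mul_eq_zero.mp h3 with h5 | h5
    · exact hωne (by linear_combination h5)
    · rw [h5, Qtr_zero] at hx
      exact zero_ne_one hx
  have h0 : Nat.card (MulAction.fixedPoints G {x : F // Qtr S n x = 1}) = 0 :=
    @Nat.card_of_isEmpty _ hfix
  rw [h0] at hmod
  have hdvd : 3 ∣ Nat.card {x : F // Qtr S n x = 1} :=
    (Nat.modEq_zero_iff_dvd).mp hmod
  intro hcontra
  rw [hcontra] at hdvd
  have h7 : (3 : ℕ).Prime := by norm_num
  have := h7.dvd_of_dvd_pow hdvd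
  norm_num at this

lemma card_ne_of_nodd_Seven (hn : Odd n) (hS : Even S.card) :
    Nat.card {x : F // Qtr S n x = 1} ≠ 2 ^ (n - 1) := by
  classical
  letI : Fintype F := Fintype.ofFinite F
  rw [card_subtype]
  intro hA
  have hn1 : 1 ≤ n := Nat.one_le_iff_ne_zero.mpr (NeZero.ne n)
  have hW : ∑ x : F, eps (Qtr S n x) = 0 := by
    rw [W_eq, hA]
    have h1 : n - 1 + 1 = n := by omega
    have h2 : (2 : ℤ) ^ n = 2 ^ (n - 1) * 2 := by
      conv_lhs => rw [← h1]
      rw [pow_succ]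
    push_cast
    rw [h2]
    ring
  have hWsq := Wsq_eq S n
  rw [hW, mul_zero] at hWsq
  set radF := Finset.univ.filter (fun z : F => ∀ x : F, Bfm S n x z = 0) with hradF
  have hrad0 : ∀ z ∈ radF, eps (Qtr S n z) * 2 ^ n = 2 ^ n := by
    intro z hz
    rw [hradF, Finset.mem_filter] at hz
    rw [Q_rad_zero S n hn hS z hz.2, eps_zero, one_mul]
  rw [Finset.sum_congr rfl hrad0, Finset.sum_const] at hWsq
  have hmem : (0 : F) ∈ radF := by
    rw [hradF, Finset.mem_filter]
    refine ⟨Finset.mem_univ _, fun x => ?_⟩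
    rw [Bfm_symm, Bfm_zero_left]
  have hpos : 0 < radF.card := Finset.card_pos.mpr ⟨0, hmem⟩
  have : (0 : ℤ) < radF.card • (2 ^ n : ℤ) := by
    rw [nsmul_eq_mul]
    positivity
  omega

end QtrAux

/-- `g` is balanced if it takes the value `1` exactly `2^(n-1)` times. -/
noncomputable def BalancedG (n : ℕ) (g : GaloisField 2 n → ZMod 2) : Prop :=
  Nat.card {x : GaloisField 2 n // g x = 1} = 2 ^ (n - 1)

/-- If all exponents in `S` are odd, then `Q_n` is balanced iff both `n` and the
number of terms are odd. -/
theorem all_odd_exponents_balanced_iff (S : Finset ℕ) (hS : S.Nonempty)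
    (hpos : ∀ i ∈ S, 1 ≤ i) (hOdd : ∀ i ∈ S, Odd i) (n : ℕ) (hn : 1 ≤ n) :
    BalancedG n (Qtr S n) ↔ Odd n ∧ Odd S.card := by
  haveI : NeZero n := ⟨by omega⟩
  unfold BalancedG
  constructor
  · intro h
    have hn' : Odd n := by
      by_contra hne
      exact QtrAux.card_ne_of_even S n hOdd hne h
    refine ⟨hn', ?_⟩
    by_contra hcard
    exact QtrAux.card_ne_of_nodd_Seven S n hn' (Nat.not_odd_iff_even.mp hcard) h
  · rintro ⟨hn', hS'⟩
    exact QtrAux.card_of_odd_odd S n hn' hS'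
end

section
/- Let S be a nonempty finite set of positive integers with J = max S, let P(X) = ∑_{i∈S} (X^(J+i) + X^(J−i)) in (ZMod 2)[X], and let d_Q be the multiplicity of 1 as a root of P. If ν ≥ 0 and the quadratic trace function Q_{2^ν}(x) = Tr(∑_{i∈S} x^(2^i+1)) on GaloisField 2 (2^ν) is balanced, then 2^ν < 2·d_Q. -/
open Polynomial

variable {n : ℕ}

/-- Frobenius as a `ZMod 2`-linear endomorphism of `GaloisField 2 n`. -/
noncomputable def sigmaE (n : ℕ) : Module.End (ZMod 2) (GaloisField 2 n) where
  toFun x := x ^ 2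
  map_add' a b := add_pow_char a b 2
  map_smul' c x := by
    show (c • x) ^ 2 = c • x ^ 2
    rw [Algebra.smul_def, Algebra.smul_def, mul_pow, ← map_pow, ZMod.pow_card]

@[simp] lemma sigmaE_apply (x : GaloisField 2 n) : sigmaE n x = x ^ 2 := rfl

lemma sigmaE_mul (x y : GaloisField 2 n) : sigmaE n (x * y) = sigmaE n x * sigmaE n y := by
  simp [mul_pow]

lemma sigmaE_pow_apply (k : ℕ) : ∀ x : GaloisField 2 n, (sigmaE n ^ k) x = x ^ 2 ^ k := by
  induction k with
  | zero => simp
  | succ k ih =>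
    intro x
    rw [pow_succ' (sigmaE n), Module.End.mul_apply, sigmaE_apply, ih, ← pow_mul, pow_succ (2 : ℕ),
      mul_comm]

lemma sigmaE_pow_n (hn : n ≠ 0) : sigmaE n ^ n = 1 := by
  haveI : Fintype (GaloisField 2 n) := Fintype.ofFinite _
  ext x
  rw [sigmaE_pow_apply, Module.End.one_apply]
  have hcard : Fintype.card (GaloisField 2 n) = 2 ^ n := by
    rw [← Nat.card_eq_fintype_card, GaloisField.card 2 n hn]
  rw [← hcard, FiniteField.pow_card]

/-- Frobenius as a linear equivalence. -/
noncomputable def sigmaLE (n : ℕ) : GaloisField 2 n ≃ₗ[ZMod 2] GaloisField 2 n :=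
  LinearEquiv.ofBijective (sigmaE n)
    ⟨by
      intro a b hab
      have : frobenius (GaloisField 2 n) 2 a = frobenius (GaloisField 2 n) 2 b := by
        simpa [frobenius_def] using hab
      exact frobenius_inj _ 2 this,
      by
      intro y
      exact Finite.surjective_of_injective (f := fun a => sigmaE n a)
        (fun a b hab => frobenius_inj (GaloisField 2 n) 2 (by simpa [frobenius_def] using hab)) y⟩

@[simp] lemma sigmaLE_apply (x : GaloisField 2 n) : sigmaLE n x = x ^ 2 := rfl

lemma trace_sigmaE (x : GaloisField 2 n) :
    Algebra.trace (ZMod 2) (GaloisField 2 n) (sigmaE n x)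
      = Algebra.trace (ZMod 2) (GaloisField 2 n) x := by
  have he : ((Algebra.lmul (ZMod 2) (GaloisField 2 n)) (sigmaE n x))
      = (sigmaLE n).conj ((Algebra.lmul (ZMod 2) (GaloisField 2 n)) x) := by
    ext y
    have h1 : sigmaLE n ((sigmaLE n).symm y) = y := (sigmaLE n).apply_symm_apply y
    rw [sigmaLE_apply] at h1
    simp only [LinearEquiv.conj_apply, LinearMap.comp_apply, LinearEquiv.coe_coe,
      sigmaLE_apply, sigmaE_apply]
    change x ^ 2 * y = (x * (sigmaLE n).symm y) ^ 2
    rw [mul_pow, h1]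
  rw [Algebra.trace_apply, Algebra.trace_apply, he, LinearMap.trace_conj']

lemma trace_sigmaE_pow (k : ℕ) (x : GaloisField 2 n) :
    Algebra.trace (ZMod 2) (GaloisField 2 n) ((sigmaE n ^ k) x)
      = Algebra.trace (ZMod 2) (GaloisField 2 n) x := by
  induction k generalizing x with
  | zero => simp
  | succ k ih =>
    rw [pow_succ' (sigmaE n), Module.End.mul_apply]
    rw [trace_sigmaE, ih]

lemma sigma_tau (hn : n ≠ 0) : sigmaE n * sigmaE n ^ (n - 1) = 1 := by
  rw [← pow_succ']
  rw [show n - 1 + 1 = n by omega]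
  exact sigmaE_pow_n hn

lemma tau_sigma (hn : n ≠ 0) : sigmaE n ^ (n - 1) * sigmaE n = 1 := by
  rw [← pow_succ]
  rw [show n - 1 + 1 = n by omega]
  exact sigmaE_pow_n hn

lemma trace_adj (hn : n ≠ 0) (u v : GaloisField 2 n) :
    Algebra.trace (ZMod 2) (GaloisField 2 n) (sigmaE n u * v)
      = Algebra.trace (ZMod 2) (GaloisField 2 n) (u * (sigmaE n ^ (n - 1)) v) := by
  have h1 : sigmaE n ((sigmaE n ^ (n - 1)) v) = v := by
    rw [← Module.End.mul_apply, sigma_tau hn, Module.End.one_apply]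
  have h2 := trace_sigmaE (n := n) (u * (sigmaE n ^ (n - 1)) v)
  rw [sigmaE_mul, h1] at h2
  exact h2

lemma trace_adj_pow (hn : n ≠ 0) (k : ℕ) :
    ∀ u v : GaloisField 2 n,
      Algebra.trace (ZMod 2) (GaloisField 2 n) ((sigmaE n ^ k) u * v)
        = Algebra.trace (ZMod 2) (GaloisField 2 n) (u * ((sigmaE n ^ (n - 1)) ^ k) v) := by
  induction k with
  | zero => simp
  | succ k ih =>
    intro u v
    rw [pow_succ (sigmaE n), Module.End.mul_apply, ih (sigmaE n u) v, trace_adj hn,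
      pow_succ' (sigmaE n ^ (n - 1)), Module.End.mul_apply]

lemma trace_D_adj (hn : n ≠ 0) (u v : GaloisField 2 n) :
    Algebra.trace (ZMod 2) (GaloisField 2 n) ((sigmaE n - 1) u * v)
      = Algebra.trace (ZMod 2) (GaloisField 2 n)
          (u * (sigmaE n ^ (n - 1)) ((sigmaE n - 1) v)) := by
  have hts : (sigmaE n ^ (n - 1)) (sigmaE n v) = v := by
    rw [← Module.End.mul_apply, tau_sigma hn, Module.End.one_apply]
  rw [LinearMap.sub_apply, Module.End.one_apply, sub_mul, map_sub, trace_adj hn,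
    LinearMap.sub_apply, Module.End.one_apply, map_sub, hts, mul_sub, map_sub]
  have h2 : ∀ a b : ZMod 2, a - b = b - a := by decide
  exact h2 _ _

lemma trace_Dpow_adj (hn : n ≠ 0) (m : ℕ) :
    ∀ u v : GaloisField 2 n,
      Algebra.trace (ZMod 2) (GaloisField 2 n) (((sigmaE n - 1) ^ m) u * v)
        = Algebra.trace (ZMod 2) (GaloisField 2 n)
            (u * ((sigmaE n ^ (n - 1)) ^ m) (((sigmaE n - 1) ^ m) v)) := by
  induction m with
  | zero => simp
  | succ m ih =>
    intro u v
    have hDτ : Commute (sigmaE n - 1) ((sigmaE n ^ (n - 1)) ^ m) :=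
      (Commute.sub_left ((Commute.refl (sigmaE n)).pow_right _)
        (Commute.one_left _)).pow_right m
    have hc : ∀ w : GaloisField 2 n,
        (sigmaE n - 1) (((sigmaE n ^ (n - 1)) ^ m) w)
          = ((sigmaE n ^ (n - 1)) ^ m) ((sigmaE n - 1) w) := by
      intro w
      have h := DFunLike.congr_fun hDτ.eq w
      simpa only [Module.End.mul_apply] using h
    rw [pow_succ (sigmaE n - 1), Module.End.mul_apply, ih ((sigmaE n - 1) u) v,
      trace_D_adj hn]
    congr 1
    have h3 : (sigmaE n - 1) (((sigmaE n - 1) ^ m) v)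
        = ((sigmaE n - 1) ^ m) ((sigmaE n - 1) v) := by
      have h := DFunLike.congr_fun
        ((pow_succ' (sigmaE n - 1) m).symm.trans (pow_succ (sigmaE n - 1) m)) v
      simpa only [Module.End.mul_apply] using h
    rw [hc, h3, pow_succ' (sigmaE n ^ (n - 1)) m]
    simp only [Module.End.mul_apply]

lemma Qtr_eq (S : Finset ℕ) (x : GaloisField 2 n) :
    Qtr S n x = ∑ i ∈ S,
      Algebra.trace (ZMod 2) (GaloisField 2 n) ((sigmaE n ^ i) x * x) := by
  rw [Qtr, map_sum]
  refine Finset.sum_congr rfl fun i _ => ?_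
  rw [sigmaE_pow_apply, pow_succ]

lemma D_nilpotent (ν : ℕ) : (sigmaE (2 ^ ν) - 1) ^ (2 ^ ν) = 0 := by
  set n := 2 ^ ν with hn
  have hn0 : n ≠ 0 := by positivity
  have hinj : Function.Injective
      (algebraMap (ZMod 2) (Module.End (ZMod 2) (GaloisField 2 n))) := by
    intro a b hab
    have h1 := DFunLike.congr_fun hab (1 : GaloisField 2 n)
    rw [Module.algebraMap_end_apply, Module.algebraMap_end_apply, Algebra.smul_def,
      Algebra.smul_def] at h1
    exact (algebraMap (ZMod 2) (GaloisField 2 n)).injective (by simpa using h1)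
  haveI : CharP (Module.End (ZMod 2) (GaloisField 2 n)) 2 :=
    charP_of_injective_algebraMap hinj 2
  have hsub : sigmaE n - 1 = sigmaE n + 1 := CharTwo.sub_eq_add _ _
  rw [hsub]
  have h := add_pow_char_pow_of_commute (p := 2) (n := ν)
    (Commute.one_right (sigmaE n))
  rw [h, ← hn, sigmaE_pow_n hn0, one_pow]
  exact CharTwo.add_self_eq_zero 1

lemma Q_vanish (S : Finset ℕ) (hn0 : n ≠ 0) (hnil : (sigmaE n - 1) ^ n = 0)
    (m : ℕ) (h2m : n ≤ 2 * m) (w : GaloisField 2 n) :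
    Qtr S n (((sigmaE n - 1) ^ m) w) = 0 := by
  have hD2 : ((sigmaE n - 1) ^ m) * ((sigmaE n - 1) ^ m) = 0 := by
    rw [← pow_add, show m + m = n + (2 * m - n) by omega, pow_add, hnil, zero_mul]
  rw [Qtr_eq]
  refine Finset.sum_eq_zero fun i _ => ?_
  have hci : (sigmaE n ^ i) (((sigmaE n - 1) ^ m) w)
      = ((sigmaE n - 1) ^ m) ((sigmaE n ^ i) w) := by
    have hcomm : Commute (sigmaE n ^ i) ((sigmaE n - 1) ^ m) :=
      (((Commute.refl (sigmaE n)).sub_right (Commute.one_right _)).pow_pow i m)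
    simpa only [Module.End.mul_apply] using DFunLike.congr_fun hcomm.eq w
  rw [hci, trace_Dpow_adj hn0]
  have hz : ((sigmaE n - 1) ^ m) (((sigmaE n - 1) ^ m) w) = 0 := by
    have := DFunLike.congr_fun hD2 w
    simpa only [Module.End.mul_apply, LinearMap.zero_apply] using this
  rw [hz, map_zero, mul_zero, map_zero]

/-- The linearized operator associated to the bilinear form of `Qtr`. -/
noncomputable def LopE (S : Finset ℕ) (n : ℕ) : Module.End (ZMod 2) (GaloisField 2 n) :=
  ∑ i ∈ S, (sigmaE n ^ i + (sigmaE n ^ (n - 1)) ^ i)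

lemma Qtr_add (S : Finset ℕ) (hn0 : n ≠ 0) (x z : GaloisField 2 n) :
    Qtr S n (x + z) = Qtr S n x + Qtr S n z
      + Algebra.trace (ZMod 2) (GaloisField 2 n) (x * (LopE S n) z) := by
  rw [Qtr_eq, Qtr_eq, Qtr_eq, LopE, LinearMap.sum_apply, Finset.mul_sum, map_sum,
    ← Finset.sum_add_distrib, ← Finset.sum_add_distrib]
  refine Finset.sum_congr rfl fun i _ => ?_
  rw [map_add (sigmaE n ^ i), add_mul, mul_add, mul_add, map_add, map_add, map_add,
    LinearMap.add_apply, mul_add, map_add, trace_adj_pow hn0 i x z,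
    mul_comm ((sigmaE n ^ i) z) x]
  abel

lemma finrank_ker_D_pow_le (k : ℕ) :
    Module.finrank (ZMod 2) (LinearMap.ker ((sigmaE n - 1) ^ k)) ≤ k := by
  induction k with
  | zero =>
    rw [pow_zero]
    rw [show (1 : Module.End (ZMod 2) (GaloisField 2 n)) = LinearMap.id from rfl,
      LinearMap.ker_id]
    simp
  | succ k ih =>
    have hmap : ∀ x ∈ LinearMap.ker ((sigmaE n - 1) ^ (k + 1)),
        (sigmaE n - 1) x ∈ LinearMap.ker ((sigmaE n - 1) ^ k) := by
      intro x hx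
      rw [LinearMap.mem_ker] at hx ⊢
      have h := DFunLike.congr_fun (pow_succ (sigmaE n - 1) k).symm x
      simp only [Module.End.mul_apply] at h
      rw [h, hx]
    set ψ := (sigmaE n - 1).restrict hmap with hψ
    have h1 := LinearMap.finrank_range_add_finrank_ker ψ
    have h2 : Module.finrank (ZMod 2) (LinearMap.range ψ)
        ≤ Module.finrank (ZMod 2) (LinearMap.ker ((sigmaE n - 1) ^ k)) :=
      (LinearMap.range ψ).finrank_le
    have h3 : Module.finrank (ZMod 2) (LinearMap.ker ψ) ≤ 1 := by
      have hkerD : Module.finrank (ZMod 2) (LinearMap.ker (sigmaE n - 1)) ≤ 1 := by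
        have hle : LinearMap.ker (sigmaE n - 1)
            ≤ Submodule.span (ZMod 2) {(1 : GaloisField 2 n)} := by
          intro x hx
          rw [LinearMap.mem_ker, LinearMap.sub_apply, Module.End.one_apply, sub_eq_zero,
            sigmaE_apply] at hx
          have hfac : x * (x - 1) = 0 := by rw [mul_sub, mul_one, ← sq, hx, sub_self]
          rcases mul_eq_zero.mp hfac with h0 | h1
          · rw [h0]; exact Submodule.zero_mem _
          · rw [sub_eq_zero] at h1
            rw [h1]
            exact Submodule.mem_span_singleton_self _
        calc Module.finrank (ZMod 2) (LinearMap.ker (sigmaE n - 1))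
            ≤ Module.finrank (ZMod 2) (Submodule.span (ZMod 2) {(1 : GaloisField 2 n)}) :=
              Submodule.finrank_mono hle
          _ = 1 := finrank_span_singleton one_ne_zero
      have hj : ∀ y : LinearMap.ker ψ, ((y : LinearMap.ker ((sigmaE n - 1) ^ (k + 1))) :
          GaloisField 2 n) ∈ LinearMap.ker (sigmaE n - 1) := by
        intro y
        have hy := y.2
        rw [LinearMap.mem_ker] at hy ⊢
        have hcoe : (ψ y.1 : GaloisField 2 n) = (sigmaE n - 1) y.1.1 := rfl
        rw [← hcoe, hy]
        rfl
      let j : LinearMap.ker ψ →ₗ[ZMod 2] LinearMap.ker (sigmaE n - 1) :=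
        LinearMap.codRestrict _
          ((LinearMap.ker ((sigmaE n - 1) ^ (k + 1))).subtype.comp
            (LinearMap.ker ψ).subtype) hj
      have hjinj : Function.Injective j := by
        intro a b hab
        have hval : ((j a : GaloisField 2 n)) = ((j b : GaloisField 2 n)) :=
          congrArg Subtype.val hab
        exact Subtype.ext (Subtype.ext hval)
      exact (LinearMap.finrank_le_finrank_of_injective hjinj).trans hkerD
    omega

lemma ker_le_range_D (hn0 : n ≠ 0) (hnil : (sigmaE n - 1) ^ n = 0) (e : ℕ) (he : e ≤ n) :
    LinearMap.ker ((sigmaE n - 1) ^ e) ≤ LinearMap.range ((sigmaE n - 1) ^ (n - e)) := by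
  have hfr : Module.finrank (ZMod 2) (GaloisField 2 n) = n := GaloisField.finrank 2 hn0
  have h1 := finrank_ker_D_pow_le (n := n) e
  have h2 := finrank_ker_D_pow_le (n := n) (n - e)
  have h3 := LinearMap.finrank_range_add_finrank_ker ((sigmaE n - 1) ^ (n - e))
  rw [hfr] at h3
  have hle : LinearMap.range ((sigmaE n - 1) ^ (n - e))
      ≤ LinearMap.ker ((sigmaE n - 1) ^ e) := by
    rintro x ⟨y, rfl⟩
    rw [LinearMap.mem_ker, ← Module.End.mul_apply, ← pow_add,
      show e + (n - e) = n by omega, hnil, LinearMap.zero_apply]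
  have heq := Submodule.eq_of_le_of_finrank_le hle (by omega)
  rw [heq]

lemma kerL_le_range (S : Finset ℕ) (hS : S.Nonempty)
    (hpos : ∀ i ∈ S, 1 ≤ i) (J : ℕ) (hJ : J = S.max' hS)
    (P : (ZMod 2)[X])
    (hP : P = ∑ i ∈ S, ((X : (ZMod 2)[X]) ^ (J + i) + (X : (ZMod 2)[X]) ^ (J - i)))
    (dQ : ℕ) (hd : dQ = P.rootMultiplicity 1)
    (hn0 : n ≠ 0) (hnil : (sigmaE n - 1) ^ n = 0) (hdn : dQ ≤ n)
    (z : GaloisField 2 n) (hz : (LopE S n) z = 0) :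
    z ∈ LinearMap.range ((sigmaE n - 1) ^ (n - dQ)) := by
  have hJS : J ∈ S := hJ ▸ S.max'_mem hS
  have hJ1 : 1 ≤ J := hpos J hJS
  -- P is nonzero
  have hev : P.eval 0 = 1 := by
    rw [hP, eval_finset_sum]
    have hterm : ∀ i ∈ S, (((X : (ZMod 2)[X]) ^ (J + i) + (X : (ZMod 2)[X]) ^ (J - i)).eval 0)
        = if i = J then 1 else 0 := by
      intro i hi
      have hiJ : i ≤ J := hJ ▸ S.le_max' i hi
      rcases eq_or_ne i J with heq | hne
      · subst heq
        simp [Nat.sub_self, zero_pow (show i + i ≠ 0 by omega)]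
      · have h1 : J + i ≠ 0 := by omega
        have h2 : J - i ≠ 0 := by omega
        simp [zero_pow h1, zero_pow h2, hne]
    rw [Finset.sum_congr rfl hterm, Finset.sum_ite_eq' S J (fun _ => (1 : ZMod 2)),
      if_pos hJS]
  have hPne : P ≠ 0 := by
    intro h
    rw [h, eval_zero] at hev
    exact zero_ne_one hev
  obtain ⟨u, hu, hnd⟩ := P.exists_eq_pow_rootMultiplicity_mul_and_not_dvd hPne 1
  rw [← hd] at hu
  have hcop : IsCoprime ((X - C (1 : ZMod 2)) ^ n) u :=
    ((irreducible_X_sub_C (1 : ZMod 2)).coprime_iff_not_dvd.mpr hnd).pow_left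
  obtain ⟨a, b, hab⟩ := hcop
  -- push to endomorphisms
  have hXC : aeval (sigmaE n) (X - C (1 : ZMod 2)) = sigmaE n - 1 := by
    simp
  have hBU : (aeval (sigmaE n) b) * (aeval (sigmaE n) u) = 1 := by
    have h := congrArg (aeval (sigmaE n)) hab
    rw [map_add, map_mul, map_mul, map_pow, hXC, hnil, mul_zero, zero_add, map_one] at h
    exact h
  -- aeval σ P = σ^J * L
  have hM : aeval (sigmaE n) P = sigmaE n ^ J * LopE S n := by
    rw [hP, map_sum, LopE, Finset.mul_sum]
    refine Finset.sum_congr rfl fun i hi => ?_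
    have hiJ : i ≤ J := hJ ▸ S.le_max' i hi
    rw [map_add, map_pow, map_pow, aeval_X, mul_add, ← pow_add]
    congr 1
    rw [← pow_mul, ← pow_add, show J + (n - 1) * i = (J - i) + n * i by
      have := Nat.one_le_iff_ne_zero.mpr hn0; nlinarith [Nat.sub_add_cancel hiJ,
        Nat.sub_add_cancel this]]
    rw [pow_add, pow_mul, sigmaE_pow_n hn0, one_pow, mul_one]
  have hMz : (aeval (sigmaE n) P) z = 0 := by
    rw [hM, Module.End.mul_apply, hz, map_zero]
  have hfac : aeval (sigmaE n) P = (sigmaE n - 1) ^ dQ * aeval (sigmaE n) u := by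
    rw [hu, map_mul, map_pow, hXC]
  rw [hfac, Module.End.mul_apply] at hMz
  have hker : (aeval (sigmaE n) u) z ∈ LinearMap.ker ((sigmaE n - 1) ^ dQ) := hMz
  obtain ⟨w, hw⟩ := ker_le_range_D hn0 hnil dQ hdn hker
  refine ⟨(aeval (sigmaE n) b) w, ?_⟩
  have hcomm : (sigmaE n - 1) ^ (n - dQ) * aeval (sigmaE n) b
      = aeval (sigmaE n) b * (sigmaE n - 1) ^ (n - dQ) := by
    rw [← hXC, ← map_pow, ← map_mul, ← map_mul, mul_comm]
  have hz1 : z = (aeval (sigmaE n) b) ((aeval (sigmaE n) u) z) := by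
    have := DFunLike.congr_fun hBU z
    simpa only [Module.End.mul_apply, Module.End.one_apply] using this.symm
  rw [hz1, ← hw, ← Module.End.mul_apply ((sigmaE n - 1) ^ (n - dQ)) (aeval (sigmaE n) b),
    hcomm, Module.End.mul_apply]

/-- The additive character `(-1)^a` with values in `ℤ`. -/
def chiZ (a : ZMod 2) : ℤ := if a = 0 then 1 else -1

lemma chiZ_add : ∀ a b : ZMod 2, chiZ (a + b) = chiZ a * chiZ b := by decide

lemma chiZ_zero : chiZ 0 = 1 := rfl

lemma char_sum_zero [Fintype (GaloisField 2 n)] (c : GaloisField 2 n) (hc : c ≠ 0) :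
    ∑ x : GaloisField 2 n, chiZ (Algebra.trace (ZMod 2) (GaloisField 2 n) (x * c)) = 0 := by
  have hnd := traceForm_nondegenerate (ZMod 2) (GaloisField 2 n)
  have hex : ∃ x₁, Algebra.trace (ZMod 2) (GaloisField 2 n) (x₁ * c) ≠ 0 := by
    by_contra h
    push_neg at h
    refine hc (hnd.1 c fun y => ?_)
    rw [Algebra.traceForm_apply, mul_comm]
    exact h y
  obtain ⟨x₁, hx₁⟩ := hex
  have hone : ∀ a : ZMod 2, a ≠ 0 → a = 1 := by decide
  have hx1 : Algebra.trace (ZMod 2) (GaloisField 2 n) (x₁ * c) = 1 := hone _ hx₁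
  set f : GaloisField 2 n → ℤ := fun x =>
    chiZ (Algebra.trace (ZMod 2) (GaloisField 2 n) (x * c)) with hf
  have hstep : ∀ x, f (x + x₁) = - f x := by
    intro x
    have htr : Algebra.trace (ZMod 2) (GaloisField 2 n) ((x + x₁) * c)
        = Algebra.trace (ZMod 2) (GaloisField 2 n) (x * c) + 1 := by
      rw [add_mul, map_add, hx1]
    have hflip : ∀ a : ZMod 2, chiZ (a + 1) = -(chiZ a) := by decide
    rw [hf]
    simp only [htr]
    exact hflip _
  have hrev : ∑ x : GaloisField 2 n, f x = ∑ x : GaloisField 2 n, f (x + x₁) :=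
    (Fintype.sum_equiv (Equiv.addRight x₁) (fun x => f (x + x₁)) f (fun x => rfl)).symm
  have hkey : ∑ x : GaloisField 2 n, f x = -∑ x : GaloisField 2 n, f x := by
    conv_lhs => rw [hrev]
    rw [show (∑ x : GaloisField 2 n, f (x + x₁)) = ∑ x : GaloisField 2 n, -f x from
      Finset.sum_congr rfl fun x _ => hstep x, ← Finset.sum_neg_distrib]
  linarith [hkey]

/-- If `Q_{2^ν}` is balanced then `2^ν < 2·d_Q`, where `d_Q` is the multiplicity of the
root `1` in `P(X) = ∑_{i∈S}(X^(J+i) + X^(J-i))`. -/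
theorem balanced_pow_two_lt (S : Finset ℕ) (hS : S.Nonempty)
    (hpos : ∀ i ∈ S, 1 ≤ i) (J : ℕ) (hJ : J = S.max' hS)
    (P : (ZMod 2)[X])
    (hP : P = ∑ i ∈ S, ((X : (ZMod 2)[X]) ^ (J + i) + (X : (ZMod 2)[X]) ^ (J - i)))
    (dQ : ℕ) (hd : dQ = P.rootMultiplicity 1)
    (ν : ℕ) (hbal : BalancedG (2 ^ ν) (Qtr S (2 ^ ν))) :
    2 ^ ν < 2 * dQ := by
  by_contra hlt
  push_neg at hlt
  classical
  have hnil : (sigmaE (2 ^ ν) - 1) ^ (2 ^ ν) = 0 := D_nilpotent ν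
  set n := 2 ^ ν with hn
  have hn0 : n ≠ 0 := by positivity
  have hn1 : 1 ≤ n := Nat.one_le_iff_ne_zero.mpr hn0
  have hdn : dQ ≤ n := by omega
  haveI : Fintype (GaloisField 2 n) := Fintype.ofFinite _
  have hcard : (Fintype.card (GaloisField 2 n)) = 2 ^ n := by
    rw [← Nat.card_eq_fintype_card, GaloisField.card 2 n hn0]
  -- the exponential sum
  set W : ℤ := ∑ x : GaloisField 2 n, chiZ (Qtr S n x) with hW
  -- balancedness gives W = 0
  have hW0 : W = 0 := by
    have hsplit : ∀ a : ZMod 2, chiZ a = 1 - 2 * (if a = 1 then 1 else 0) := by decide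
    have h1 : W = ∑ x : GaloisField 2 n, (1 - 2 * (if Qtr S n x = 1 then (1 : ℤ) else 0)) := by
      rw [hW]
      exact Finset.sum_congr rfl fun x _ => hsplit (Qtr S n x)
    rw [h1, Finset.sum_sub_distrib, Finset.sum_const, ← Finset.mul_sum, Finset.sum_boole]
    have hfc : (Finset.univ.filter fun x : GaloisField 2 n => Qtr S n x = 1).card
        = 2 ^ (n - 1) := by
      have h2 := hbal
      rw [BalancedG, Nat.card_eq_fintype_card, Fintype.card_subtype] at h2
      exact h2
    rw [hfc, Finset.card_univ, hcard, nsmul_eq_mul, mul_one]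
    have h2 : ((2 : ℤ)) ^ n = 2 * 2 ^ (n - 1) := by
      rw [← pow_succ']
      congr 1
      omega
    push_cast
    rw [h2]
    ring
  -- Q vanishes on the kernel of L
  have hker0 : ∀ z, (LopE S n) z = 0 → Qtr S n z = 0 := by
    intro z hz
    obtain ⟨w, hw⟩ := kerL_le_range S hS hpos J hJ P hP dQ hd hn0 hnil hdn z hz
    rw [← hw]
    exact Q_vanish S hn0 hnil (n - dQ) (by omega) w
  -- lower bound for W ^ 2
  have hWW : (2 : ℤ) ^ n ≤ W * W := by
    have hinner : ∀ x : GaloisField 2 n,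
        (∑ y : GaloisField 2 n, chiZ (Qtr S n y))
          = ∑ z : GaloisField 2 n, chiZ (Qtr S n (x + z)) := fun x =>
      (Fintype.sum_equiv (Equiv.addLeft x) (fun z => chiZ (Qtr S n (x + z)))
        (fun y => chiZ (Qtr S n y)) (fun z => rfl)).symm
    have hsum : W * W = ∑ x : GaloisField 2 n, ∑ z : GaloisField 2 n,
        chiZ (Qtr S n x) * chiZ (Qtr S n (x + z)) := by
      rw [hW, Finset.sum_mul_sum]
      refine Finset.sum_congr rfl fun x _ => ?_
      rw [← Finset.mul_sum, hinner x, Finset.mul_sum]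
    have hterm : ∀ x z : GaloisField 2 n,
        chiZ (Qtr S n x) * chiZ (Qtr S n (x + z))
          = chiZ (Qtr S n z)
            * chiZ (Algebra.trace (ZMod 2) (GaloisField 2 n) (x * (LopE S n) z)) := by
      intro x z
      have hqadd := Qtr_add S hn0 x z
      have habs : ∀ a c d : ZMod 2, a + (a + c + d) = c + d := by decide
      calc chiZ (Qtr S n x) * chiZ (Qtr S n (x + z))
          = chiZ (Qtr S n x + Qtr S n (x + z)) := (chiZ_add _ _).symm
        _ = chiZ (Qtr S n z
            + Algebra.trace (ZMod 2) (GaloisField 2 n) (x * (LopE S n) z)) := by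
            rw [hqadd, habs]
        _ = _ := chiZ_add _ _
    have hsum2 : W * W = ∑ z : GaloisField 2 n, chiZ (Qtr S n z)
        * ∑ x : GaloisField 2 n,
            chiZ (Algebra.trace (ZMod 2) (GaloisField 2 n) (x * (LopE S n) z)) := by
      rw [hsum, Finset.sum_comm]
      refine Finset.sum_congr rfl fun z _ => ?_
      rw [Finset.mul_sum]
      exact Finset.sum_congr rfl fun x _ => hterm x z
    rw [hsum2]
    have hposall : ∀ z : GaloisField 2 n, z ∈ Finset.univ →
        (0 : ℤ) ≤ chiZ (Qtr S n z) * ∑ x : GaloisField 2 n,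
          chiZ (Algebra.trace (ZMod 2) (GaloisField 2 n) (x * (LopE S n) z)) := by
      intro z _
      by_cases hz : (LopE S n) z = 0
      · have hs : (∑ x : GaloisField 2 n,
            chiZ (Algebra.trace (ZMod 2) (GaloisField 2 n) (x * (LopE S n) z)))
            = (Fintype.card (GaloisField 2 n) : ℤ) := by
          rw [hz]
          simp [chiZ]
        rw [hker0 z hz, hs, chiZ_zero, one_mul]
        positivity
      · rw [char_sum_zero ((LopE S n) z) hz, mul_zero]
    have hz0 : chiZ (Qtr S n 0) * ∑ x : GaloisField 2 n,
        chiZ (Algebra.trace (ZMod 2) (GaloisField 2 n) (x * (LopE S n) 0)) = 2 ^ n := by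
      have hL0 : (LopE S n) (0 : GaloisField 2 n) = 0 := map_zero _
      have hs : (∑ x : GaloisField 2 n,
          chiZ (Algebra.trace (ZMod 2) (GaloisField 2 n) (x * (LopE S n) 0)))
          = (Fintype.card (GaloisField 2 n) : ℤ) := by
        rw [hL0]
        simp [chiZ]
      rw [hker0 0 hL0, hs, chiZ_zero, one_mul, hcard]
      push_cast
      ring
    calc (2 : ℤ) ^ n = _ := hz0.symm
      _ ≤ _ := Finset.single_le_sum hposall (Finset.mem_univ 0)
  rw [hW0, mul_zero] at hWW
  have : (0 : ℤ) < 2 ^ n := by positivity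
  linarith
end

section
/- Let S be a nonempty finite set of positive integers with J = max S, let P(X) = ∑_{i∈S} (X^(J+i) + X^(J−i)) in (ZMod 2)[X], and let d_Q be the multiplicity of 1 as a root of P. If ν ≥ 0 and 2^ν ≤ d_Q, then for n = 2^ν the quadratic trace function Q_n(x) = Tr(∑_{i∈S} x^(2^i+1)) on GaloisField 2 n is not balanced if and only if Q_n(x) = 0 for every x ∈ GaloisField 2 n. -/
open Polynomial

noncomputable def frobL (n : ℕ) : Module.End (ZMod 2) (GaloisField 2 n) where
  toFun x := x ^ 2
  map_add' x y := by show (x + y) ^ 2 = x ^ 2 + y ^ 2; rw [add_pow_char]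
  map_smul' c x := by
    simp only [_root_.smul_pow, RingHom.id_apply, ZMod.pow_card c]

lemma frobL_pow (n k : ℕ) (x : GaloisField 2 n) : ((frobL n) ^ k) x = x ^ 2 ^ k := by
  induction k generalizing x with
  | zero => simp
  | succ k ih =>
    have : frobL n x = x ^ 2 := rfl
    rw [pow_succ, Module.End.mul_apply, this, ih, ← pow_mul, pow_succ']

lemma gf_pow_card {n : ℕ} (hn : n ≠ 0) (x : GaloisField 2 n) : x ^ 2 ^ n = x := by
  haveI : Fintype (GaloisField 2 n) := Fintype.ofFinite _
  have := FiniteField.pow_card x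
  rwa [Fintype.card_eq_nat_card, GaloisField.card 2 n hn] at this

lemma trace_sq {n : ℕ} (z : GaloisField 2 n) :
    Algebra.trace (ZMod 2) (GaloisField 2 n) (z ^ 2) =
    Algebra.trace (ZMod 2) (GaloisField 2 n) z := by
  let e : GaloisField 2 n ≃ₐ[ZMod 2] GaloisField 2 n :=
    AlgEquiv.ofRingEquiv (f := frobeniusEquiv (GaloisField 2 n) 2)
      (fun c => by
        show (algebraMap (ZMod 2) (GaloisField 2 n) c) ^ 2 = _
        rw [← map_pow, ZMod.pow_card c])
  exact Algebra.trace_eq_of_algEquiv e z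

lemma trace_pow {n : ℕ} (k : ℕ) (z : GaloisField 2 n) :
    Algebra.trace (ZMod 2) (GaloisField 2 n) (z ^ 2 ^ k) =
    Algebra.trace (ZMod 2) (GaloisField 2 n) z := by
  induction k with
  | zero => simp
  | succ k ih => rw [pow_succ, pow_mul, trace_sq, ih]

lemma key_vanish (S : Finset ℕ) (J : ℕ) (P : (ZMod 2)[X])
    (hP : P = ∑ i ∈ S, ((X : (ZMod 2)[X]) ^ (J + i) + (X : (ZMod 2)[X]) ^ (J - i)))
    (ν : ℕ) (hν : 2 ^ ν ≤ P.rootMultiplicity 1) (x : GaloisField 2 (2 ^ ν)) :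
    ∑ i ∈ S, (x ^ 2 ^ (J + i) + x ^ 2 ^ (J - i)) = 0 := by
  have hdvd : ((X : (ZMod 2)[X]) - C 1) ^ (2 ^ ν) ∣ P :=
    dvd_trans (pow_dvd_pow _ hν) (P.pow_rootMultiplicity_dvd 1)
  have hXn : ((X : (ZMod 2)[X]) - C 1) ^ (2 ^ ν) = X ^ (2 ^ ν) - 1 := by
    rw [sub_pow_char_pow]
    simp
  have hf : (frobL (2 ^ ν)) ^ (2 ^ ν) = 1 := by
    ext y
    rw [frobL_pow, gf_pow_card (by positivity) y]
    rfl
  obtain ⟨q, hq⟩ := hdvd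
  have h0 : Polynomial.aeval (frobL (2 ^ ν)) P = 0 := by
    rw [hq, map_mul, hXn, map_sub, map_pow, aeval_X, map_one, hf, sub_self, zero_mul]
  have h1 : (Polynomial.aeval (frobL (2 ^ ν)) P) x = 0 := by rw [h0]; rfl
  rw [hP] at h1
  simpa [map_sum, map_add, map_pow, aeval_X, LinearMap.add_apply, frobL_pow] using h1

lemma Qtr_add_s17 (S : Finset ℕ) (hS : S.Nonempty) (J : ℕ) (hJ : J = S.max' hS) (n : ℕ)
    (hkey : ∀ x : GaloisField 2 n, ∑ i ∈ S, (x ^ 2 ^ (J + i) + x ^ 2 ^ (J - i)) = 0)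
    (x y : GaloisField 2 n) :
    (Algebra.trace (ZMod 2) (GaloisField 2 n) (∑ i ∈ S, (x + y) ^ (2 ^ i + 1))) =
    Algebra.trace (ZMod 2) (GaloisField 2 n) (∑ i ∈ S, x ^ (2 ^ i + 1)) +
    Algebra.trace (ZMod 2) (GaloisField 2 n) (∑ i ∈ S, y ^ (2 ^ i + 1)) := by
  have expand : ∀ i ∈ S, (x + y) ^ (2 ^ i + 1) =
      (x ^ (2 ^ i + 1) + y ^ (2 ^ i + 1)) + (x ^ (2 ^ i) * y + x * y ^ (2 ^ i)) := by
    intro i _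
    rw [pow_succ, pow_succ, pow_succ, add_pow_char_pow]
    ring
  rw [Finset.sum_congr rfl expand, Finset.sum_add_distrib, Finset.sum_add_distrib,
    map_add, map_add]
  have cross : ∀ i ∈ S,
      Algebra.trace (ZMod 2) (GaloisField 2 n) (x ^ (2 ^ i) * y + x * y ^ (2 ^ i)) =
      Algebra.trace (ZMod 2) (GaloisField 2 n)
        ((x ^ 2 ^ (J + i) + x ^ 2 ^ (J - i)) * y ^ 2 ^ J) := by
    intro i hi
    have hiJ : i ≤ J := hJ ▸ S.le_max' i hi
    rw [map_add, add_mul, map_add]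
    congr 1
    · rw [← trace_pow J (x ^ 2 ^ i * y), mul_pow, ← pow_mul, ← pow_add, Nat.add_comm i J]
    · rw [← trace_pow (J - i) (x * y ^ 2 ^ i), mul_pow, ← pow_mul, ← pow_add,
        Nat.add_sub_cancel' hiJ]
  have hc : Algebra.trace (ZMod 2) (GaloisField 2 n)
      (∑ i ∈ S, (x ^ (2 ^ i) * y + x * y ^ (2 ^ i))) = 0 := by
    rw [map_sum, Finset.sum_congr rfl cross, ← map_sum, ← Finset.sum_mul, hkey, zero_mul,
      map_zero]
  rw [hc, add_zero]

/-- If `2^ν ≤ d_Q` then `Q_{2^ν}` is unbalanced iff it vanishes identically. -/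
theorem unbalanced_iff_zero_of_pow_le (S : Finset ℕ) (hS : S.Nonempty)
    (hpos : ∀ i ∈ S, 1 ≤ i) (J : ℕ) (hJ : J = S.max' hS)
    (P : (ZMod 2)[X])
    (hP : P = ∑ i ∈ S, ((X : (ZMod 2)[X]) ^ (J + i) + (X : (ZMod 2)[X]) ^ (J - i)))
    (dQ : ℕ) (hd : dQ = P.rootMultiplicity 1)
    (ν : ℕ) (hν : 2 ^ ν ≤ dQ) :
    ¬ BalancedG (2 ^ ν) (Qtr S (2 ^ ν)) ↔ ∀ x : GaloisField 2 (2 ^ ν), Qtr S (2 ^ ν) x = 0 := by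
  have hn : (2 : ℕ) ^ ν ≠ 0 := by positivity
  have hkey : ∀ x : GaloisField 2 (2 ^ ν),
      ∑ i ∈ S, (x ^ 2 ^ (J + i) + x ^ 2 ^ (J - i)) = 0 :=
    fun x => key_vanish S J P hP ν (hd ▸ hν) x
  have hadd : ∀ x y, Qtr S (2 ^ ν) (x + y) = Qtr S (2 ^ ν) x + Qtr S (2 ^ ν) y :=
    fun x y => Qtr_add_s17 S hS J hJ (2 ^ ν) hkey x y
  constructor
  · intro hnb
    by_contra hne
    push_neg at hne
    obtain ⟨a, ha⟩ := hne
    have ha1 : Qtr S (2 ^ ν) a = 1 := by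
      have h2 : ∀ u : ZMod 2, u ≠ 0 → u = 1 := by decide
      exact h2 _ ha
    apply hnb
    unfold BalancedG
    haveI : Fintype (GaloisField 2 (2 ^ ν)) := Fintype.ofFinite _
    classical
    let e : {x : GaloisField 2 (2 ^ ν) // Qtr S (2 ^ ν) x = 0} ≃
        {x : GaloisField 2 (2 ^ ν) // Qtr S (2 ^ ν) x = 1} :=
      { toFun := fun z => ⟨z.1 + a, by rw [hadd, z.2, zero_add, ha1]⟩
        invFun := fun z => ⟨z.1 + a, by
          rw [hadd, z.2, ha1]
          decide⟩
        left_inv := fun z => by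
          ext
          show z.1 + a + a = z.1
          rw [add_assoc, CharTwo.add_self_eq_zero, add_zero]
        right_inv := fun z => by
          ext
          show z.1 + a + a = z.1
          rw [add_assoc, CharTwo.add_self_eq_zero, add_zero] }
    have hc : Nat.card {x : GaloisField 2 (2 ^ ν) // Qtr S (2 ^ ν) x = 1} =
        Nat.card {x : GaloisField 2 (2 ^ ν) // Qtr S (2 ^ ν) x = 0} :=
      Nat.card_congr e.symm
    have hcompl : Nat.card {x : GaloisField 2 (2 ^ ν) // Qtr S (2 ^ ν) x = 0} =
        Nat.card {x : GaloisField 2 (2 ^ ν) // ¬ Qtr S (2 ^ ν) x = 1} := by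
      apply Nat.card_congr
      apply Equiv.subtypeEquivRight
      intro x
      have h2 : ∀ u : ZMod 2, u = 0 ↔ ¬ u = 1 := by decide
      exact h2 _
    have htot : Nat.card {x : GaloisField 2 (2 ^ ν) // ¬ Qtr S (2 ^ ν) x = 1} =
        Nat.card (GaloisField 2 (2 ^ ν)) -
          Nat.card {x : GaloisField 2 (2 ^ ν) // Qtr S (2 ^ ν) x = 1} := by
      simp only [Nat.card_eq_fintype_card]
      exact Fintype.card_subtype_compl _
    have hle : Nat.card {x : GaloisField 2 (2 ^ ν) // Qtr S (2 ^ ν) x = 1} ≤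
        Nat.card (GaloisField 2 (2 ^ ν)) := by
      simp only [Nat.card_eq_fintype_card]
      exact Fintype.card_subtype_le _
    have hcard : Nat.card (GaloisField 2 (2 ^ ν)) = 2 ^ (2 ^ ν) :=
      GaloisField.card 2 (2 ^ ν) hn
    have hsplit : (2 : ℕ) ^ (2 ^ ν) = 2 * 2 ^ (2 ^ ν - 1) := by
      rw [← pow_succ']
      congr 1
      have h1 : 1 ≤ 2 ^ ν := Nat.one_le_two_pow
      omega
    rw [hcompl, htot, hcard, hsplit] at hc
    rw [hcard] at hle
    omega
  · intro hz hb
    unfold BalancedG at hb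
    have hempty : IsEmpty {x : GaloisField 2 (2 ^ ν) // Qtr S (2 ^ ν) x = 1} := by
      refine ⟨fun z => ?_⟩
      have := z.2
      rw [hz z.1] at this
      exact zero_ne_one this
    rw [Nat.card_of_isEmpty] at hb
    exact pow_ne_zero _ (two_ne_zero) hb.symm
end

section
/- Let S be a nonempty finite set of positive integers and n ≥ 1. The quadratic trace function Q_n(x) = Tr(∑_{i∈S} x^(2^i+1)) vanishes identically on GaloisField 2 n if and only if the rotation symmetric Boolean function B : (Fin n → ZMod 2) → ZMod 2 defined by B(x) = ∑_{i∈S} ∑_{j=0}^{n−1} x_j · x_{(j+i) mod n} vanishes identically on (Fin n → ZMod 2). -/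
/-- The associated rotation symmetric Boolean function
`B(x) = ∑_{i∈S} ∑_{j=0}^{n-1} x_j * x_{(j+i) mod n}`. -/
def rsB (S : Finset ℕ) (n : ℕ) (x : Fin n → ZMod 2) : ZMod 2 :=
  ∑ i ∈ S, ∑ j : Fin n, x j * x ⟨(j.val + i) % n, Nat.mod_lt _ j.pos⟩

section Aux
open Finset Polynomial

lemma two_pow_lt_iff {a b : ℕ} : 2^a < 2^b ↔ a < b :=
  Nat.pow_lt_pow_iff_right (by norm_num)

lemma two_pow_succ (a : ℕ) : 2^(a+1) = 2^a + 2^a := by ring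

lemma two_pow_add_ne (a b c : ℕ) (h : a ≠ b) : 2^a + 2^b ≠ 2^c := by
  intro he
  have hpa : 0 < 2^a := pow_pos (by norm_num) a
  have hpb : 0 < 2^b := pow_pos (by norm_num) b
  rcases Nat.lt_or_ge a b with hab | hab
  · have h4 : 2^a < 2^b := two_pow_lt_iff.mpr hab
    have h1 : b < c := two_pow_lt_iff.mp (by omega)
    have h3 : 2^(b+1) ≤ 2^c := Nat.pow_le_pow_right (by norm_num) (by omega)
    have := two_pow_succ b
    omega
  · have hab' : b < a := by omega
    have h4 : 2^b < 2^a := two_pow_lt_iff.mpr hab'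
    have h1 : a < c := two_pow_lt_iff.mp (by omega)
    have h3 : 2^(a+1) ≤ 2^c := Nat.pow_le_pow_right (by norm_num) (by omega)
    have := two_pow_succ a
    omega

lemma two_pow_add_inj' {a b c d : ℕ} (hab : a < b) (hcd : c < d)
    (h : 2^a + 2^b = 2^c + 2^d) : a = c ∧ b = d := by
  have hbd : b = d := by
    have hpa : 0 < 2^a := pow_pos (by norm_num) a
    have hpc : 0 < 2^c := pow_pos (by norm_num) c
    have h1 : 2^a < 2^b := two_pow_lt_iff.mpr hab
    have h2 : 2^c < 2^d := two_pow_lt_iff.mpr hcd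
    have e1 := two_pow_succ d
    have e2 := two_pow_succ b
    have hb : b < d + 1 := two_pow_lt_iff.mp (by omega)
    have hd : d < b + 1 := two_pow_lt_iff.mp (by omega)
    omega
  subst hbd
  have : (2:ℕ)^a = 2^c := by omega
  exact ⟨Nat.pow_right_injective (by norm_num) this, rfl⟩

lemma two_pow_add_inj {a b c d : ℕ} (hab : a ≠ b) (hcd : c ≠ d)
    (h : 2^a + 2^b = 2^c + 2^d) : (a = c ∧ b = d) ∨ (a = d ∧ b = c) := by
  rcases Nat.lt_or_ge a b with h1 | h1 <;> rcases Nat.lt_or_ge c d with h2 | h2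
  · exact Or.inl (two_pow_add_inj' h1 h2 h)
  · have h2' : d < c := by omega
    have := two_pow_add_inj' h1 h2' (by omega)
    exact Or.inr ⟨this.1, this.2⟩
  · have h1' : b < a := by omega
    have := two_pow_add_inj' h1' h2 (by omega)
    exact Or.inr ⟨this.2, this.1⟩
  · have h1' : b < a := by omega
    have h2' : d < c := by omega
    have := two_pow_add_inj' h1' h2' (by omega)
    exact Or.inl ⟨this.2, this.1⟩

-- mod helper
lemma addmod (n a b : ℕ) (ha : a < n) (hb : b < n) :
    (a + b) % n = if a + b < n then a + b else a + b - n := by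
  split_ifs with h
  · exact Nat.mod_eq_of_lt h
  · rw [Nat.mod_eq_sub_mod (by omega), Nat.mod_eq_of_lt (by omega)]
def cnt (S : Finset ℕ) (n d : ℕ) : ℕ := (S.filter (fun i => i % n = d)).card

def Cond (S : Finset ℕ) (n : ℕ) : Prop :=
  ((cnt S n 0 : ZMod 2) = 0) ∧
    ∀ d, 0 < d → d < n → ((cnt S n d : ZMod 2) + (cnt S n (n - d) : ZMod 2)) = 0

lemma sum_mod_group {M : Type*} [AddCommMonoid M] (S : Finset ℕ) {n : ℕ} (hn : 0 < n)
    (g : ℕ → M) : ∑ i ∈ S, g (i % n) = ∑ d ∈ Finset.range n, cnt S n d • g d := by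
  rw [← Finset.sum_fiberwise_of_maps_to (g := fun i => i % n)
    (fun i _ => Finset.mem_range.mpr (Nat.mod_lt _ hn)) (fun i => g (i % n))]
  refine Finset.sum_congr rfl fun d hd => ?_
  rw [Finset.sum_congr rfl (fun i hi => by rw [(Finset.mem_filter.mp hi).2]),
    Finset.sum_const]
  rfl

lemma sum_indicator_eq_cnt (S : Finset ℕ) (n d : ℕ) :
    ∑ i ∈ S, (if i % n = d then (1 : ZMod 2) else 0) = (cnt S n d : ZMod 2) := by
  rw [Finset.sum_boole]; rfl


lemma zmod2_mul_self (a : ZMod 2) : a * a = a := by revert a; decide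

lemma zmod2_add_self (a : ZMod 2) : a + a = 0 := by revert a; decide

-- rotation map on Fin n
def rot (n d : ℕ) (j : Fin n) : Fin n := ⟨(j.val + d) % n, Nat.mod_lt _ j.pos⟩

lemma rot_rot {n : ℕ} (d : ℕ) (hd : d ≤ n) (j : Fin n) : rot n d (rot n (n - d) j) = j := by
  apply Fin.ext
  show ((j.val + (n - d)) % n + d) % n = j.val
  rw [Nat.mod_add_mod]
  have : j.val + (n - d) + d = j.val + n := by omega
  rw [this, Nat.add_mod_right, Nat.mod_eq_of_lt j.isLt]

lemma rot_bijective {n : ℕ} (d : ℕ) (hd : d ≤ n) : Function.Bijective (rot n d) := by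
  have h1 : ∀ j, rot n d (rot n (n - d) j) = j := rot_rot d hd
  have h2 : ∀ j, rot n (n - d) (rot n d j) = j := by
    intro j
    have := rot_rot (n - d) (by omega) j
    rwa [Nat.sub_sub_self hd] at this
  exact ⟨Function.LeftInverse.injective (g := rot n (n-d)) h2, fun j => ⟨rot n (n-d) j, h1 j⟩⟩

lemma rot_ne {n d : ℕ} (hd0 : 0 < d) (hdn : d < n) (j : Fin n) : rot n d j ≠ j := by
  intro h
  have := congrArg Fin.val h
  simp only [rot] at this
  rw [addmod n j.val d j.isLt hdn] at this
  split_ifs at this <;> omega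

def U (n d : ℕ) (x : Fin n → ZMod 2) : ZMod 2 := ∑ j : Fin n, x j * x (rot n d j)

lemma U_zero {n : ℕ} (x : Fin n → ZMod 2) : U n 0 x = ∑ j : Fin n, x j := by
  refine Finset.sum_congr rfl fun j _ => ?_
  have : rot n 0 j = j := Fin.ext (by simp [rot, Nat.mod_eq_of_lt j.isLt])
  rw [this, zmod2_mul_self]

lemma U_pair {n d : ℕ} (hd0 : 0 < d) (hdn : d < n) (x : Fin n → ZMod 2) :
    U n (n - d) x = U n d x := by
  unfold U
  rw [← Function.Bijective.sum_comp (rot_bijective d hdn.le)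
    (fun j => x j * x (rot n (n - d) j))]
  refine Finset.sum_congr rfl fun j _ => ?_
  have h2 : rot n (n - d) (rot n d j) = j := by
    have := rot_rot (n - d) (by omega) j
    rwa [Nat.sub_sub_self hdn.le] at this
  rw [h2, mul_comm]

lemma U_half {n d : ℕ} (hd0 : 0 < d) (hdd : d + d = n) (x : Fin n → ZMod 2) :
    U n d x = 0 := by
  have hdn : d < n := by omega
  apply Finset.sum_involution (fun j _ => rot n d j)
  · intro j _
    have : rot n d (rot n d j) = j := by
      have := rot_rot d hdn.le j
      rw [show n - d = d by omega] at this
      exact this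
    rw [this, mul_comm, zmod2_add_self]
  · intro j _ _
    exact rot_ne hd0 hdn j
  · intro j _; exact Finset.mem_univ _
  · intro j _
    have := rot_rot d hdn.le j
    rw [show n - d = d by omega] at this
    exact this

lemma rsB_grouped (S : Finset ℕ) {n : ℕ} (hn : 0 < n) (x : Fin n → ZMod 2) :
    rsB S n x = ∑ d ∈ Finset.range n, cnt S n d • U n d x := by
  rw [← sum_mod_group S hn (fun d => U n d x)]
  refine Finset.sum_congr rfl fun i _ => ?_
  refine Finset.sum_congr rfl fun j _ => ?_
  congr 1
  congr 1
  exact Fin.ext (Nat.add_mod_mod _ _ _).symm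

lemma ite_or_split {P Q : Prop} [Decidable P] [Decidable Q] (hPQ : ¬(P ∧ Q)) (a : ZMod 2) :
    (if P ∨ Q then (1 : ZMod 2) else 0) * a
      = (if P then a else 0) + (if Q then a else 0) := by
  by_cases hP : P <;> by_cases hQ : Q <;> simp [hP, hQ] <;> tauto

lemma B_iff (S : Finset ℕ) {n : ℕ} (hn : 0 < n) :
    (∀ x : Fin n → ZMod 2, rsB S n x = 0) ↔ Cond S n := by
  constructor
  · intro h
    constructor
    · -- evaluate at indicator of {0}
      set j0 : Fin n := ⟨0, hn⟩ with hj0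
      have h0 := h (fun j => if j = j0 then 1 else 0)
      rw [rsB_grouped S hn] at h0
      have hU : ∀ d ∈ Finset.range n,
          U n d (fun j => if j = j0 then 1 else 0) = (if d = 0 then 1 else 0) := by
        intro d hd
        have hdn := Finset.mem_range.mp hd
        unfold U
        rw [Finset.sum_congr rfl (fun j _ => by
          rw [ite_mul, one_mul, zero_mul]), Finset.sum_ite_eq' Finset.univ j0]
        simp only [Finset.mem_univ, if_true]
        have hval : (rot n d j0).val = d := by
          show (0 + d) % n = d
          rw [zero_add, Nat.mod_eq_of_lt hdn]
        congr 1
        simp only [eq_iff_iff]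
        constructor
        · intro he
          have := congrArg Fin.val he
          rw [hval] at this
          exact this
        · intro he
          exact Fin.ext (by rw [hval, he])
      rw [Finset.sum_congr rfl (fun d hd => by rw [hU d hd])] at h0
      rw [Finset.sum_eq_single_of_mem 0 (Finset.mem_range.mpr hn)
        (fun d _ hd => by rw [if_neg hd, smul_zero])] at h0
      rw [if_pos rfl, nsmul_eq_mul, mul_one] at h0
      exact h0
    · intro d hd0 hdn
      by_cases hdd : n - d = d
      · rw [hdd, zmod2_add_self]
      · set j0 : Fin n := ⟨0, hn⟩ with hj0
        set jd : Fin n := ⟨d, hdn⟩ with hjd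
        have hj0d : j0 ≠ jd := by
          intro he
          have := congrArg Fin.val he
          simp only [hj0, hjd] at this
          omega
        set x : Fin n → ZMod 2 := fun j => if j = j0 ∨ j = jd then 1 else 0 with hx
        have h0 := h x
        rw [rsB_grouped S hn] at h0
        have hU : ∀ e ∈ Finset.range n,
            U n e x = (if e = 0 then 1 else 0) + (if e = d then 1 else 0)
              + ((if e = n - d then 1 else 0) + (if e = 0 then 1 else 0)) := by
          intro e he
          have hen := Finset.mem_range.mp he
          unfold U
          have hterm : ∀ j : Fin n, x j * x (rot n e j)
              = (if j = j0 then x (rot n e j) else 0)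
                + (if j = jd then x (rot n e j) else 0) := by
            intro j
            show (if j = j0 ∨ j = jd then (1 : ZMod 2) else 0) * x (rot n e j) = _
            exact ite_or_split (fun ⟨h1, h2⟩ => hj0d (h1 ▸ h2.symm ▸ rfl)) _
          rw [Finset.sum_congr rfl (fun j _ => hterm j),
            Finset.sum_add_distrib, Finset.sum_ite_eq' Finset.univ j0,
            Finset.sum_ite_eq' Finset.univ jd]
          simp only [Finset.mem_univ, if_true]
          have hv0 : (rot n e j0).val = e := by
            show (0 + e) % n = e
            rw [zero_add, Nat.mod_eq_of_lt hen]
          have hvd : (rot n e jd).val = (d + e) % n := rfl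
          congr 1
          · -- x (rot n e j0) = [e=0] + [e=d]
            show (if rot n e j0 = j0 ∨ rot n e j0 = jd then (1 : ZMod 2) else 0) = _
            have hiff : (rot n e j0 = j0 ∨ rot n e j0 = jd) ↔ (e = 0 ∨ e = d) := by
              constructor
              · rintro (he1 | he1) <;>
                  [left; right] <;>
                  · have := congrArg Fin.val he1
                    rw [hv0] at this
                    simpa using this
              · rintro (rfl | rfl) <;> [left; right] <;> exact Fin.ext (by rw [hv0])
            simp only [hiff]
            by_cases h1 : e = 0 <;> by_cases h2 : e = d <;>
              simp [h1, h2] <;> omega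
          · -- x (rot n e jd) = [e = n-d] + [e=0]
            show (if rot n e jd = j0 ∨ rot n e jd = jd then (1 : ZMod 2) else 0) = _
            have hmod : (d + e) % n = if d + e < n then d + e else d + e - n :=
              addmod n d e hdn hen
            have hiff : (rot n e jd = j0 ∨ rot n e jd = jd) ↔ (e = n - d ∨ e = 0) := by
              constructor
              · rintro (he1 | he1) <;>
                  [left; right] <;>
                  · have := congrArg Fin.val he1
                    rw [hvd] at this
                    simp only [hj0, hjd] at this
                    rw [hmod] at this
                    split_ifs at this <;> omega
              · rintro (rfl | rfl) <;> [left; right] <;>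
                  refine Fin.ext ?_ <;>
                  · rw [hvd, hmod]
                    simp only [hj0, hjd]
                    split_ifs <;> omega
            simp only [hiff]
            by_cases h1 : e = n - d <;> by_cases h2 : e = 0 <;>
              simp [h1, h2] <;> omega
        rw [Finset.sum_congr rfl (fun e he => by rw [hU e he])] at h0
        simp only [smul_add] at h0
        rw [Finset.sum_add_distrib, Finset.sum_add_distrib, Finset.sum_add_distrib] at h0
        have hsingle : ∀ m, m ∈ Finset.range n →
            ∑ e ∈ Finset.range n, cnt S n e • (if e = m then (1 : ZMod 2) else 0)
              = (cnt S n m : ZMod 2) := by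
          intro m hm
          rw [Finset.sum_eq_single_of_mem m hm
            (fun e _ hne => by rw [if_neg hne, smul_zero]), if_pos rfl,
            nsmul_eq_mul, mul_one]
        rw [hsingle 0 (Finset.mem_range.mpr hn), hsingle d (Finset.mem_range.mpr hdn),
          hsingle (n - d) (Finset.mem_range.mpr (by omega))] at h0
        have h2 : (cnt S n 0 : ZMod 2) * 2 = 0 := by
          rw [show (2 : ZMod 2) = 0 from rfl, mul_zero]
        linear_combination h0 - h2
  · rintro ⟨hc0, hcd⟩ x
    rw [rsB_grouped S hn]
    apply Finset.sum_involution (fun d _ => if d = 0 then 0 else n - d)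
    · intro d hd
      have hdn := Finset.mem_range.mp hd
      by_cases h0 : d = 0
      · subst h0
        simp only [reduceIte]
        rw [nsmul_eq_mul, hc0, zero_mul, zero_add]
      · rw [if_neg h0]
        by_cases hdd : n - d = d
        · rw [hdd, zmod2_add_self]
        · rw [U_pair (by omega) hdn, ← add_nsmul, nsmul_eq_mul, Nat.cast_add,
            hcd d (by omega) hdn, zero_mul]
    · intro d hd hne
      have hdn := Finset.mem_range.mp hd
      by_cases h0 : d = 0
      · exfalso
        apply hne
        subst h0
        rw [nsmul_eq_mul, hc0, zero_mul]
      · rw [if_neg h0]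
        intro hdd
        apply hne
        rw [U_half (by omega) (by omega) x, smul_zero]
    · intro d hd
      have hdn := Finset.mem_range.mp hd
      by_cases h0 : d = 0 <;> simp [h0] <;> omega
    · intro d hd
      have hdn := Finset.mem_range.mp hd
      by_cases h0 : d = 0
      · simp [h0]
      · rw [if_neg h0]
        have h1 : n - d ≠ 0 := by omega
        rw [if_neg h1]
        omega
variable (n : ℕ)

noncomputable instance gfFintype : Fintype (GaloisField 2 n) := Fintype.ofFinite _

lemma gf_card (hn : 0 < n) : Fintype.card (GaloisField 2 n) = 2 ^ n := by
  rw [← Nat.card_eq_fintype_card, GaloisField.card 2 n (by omega)]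

lemma gf_pow_reduce (hn : 0 < n) (x : GaloisField 2 n) (m : ℕ) :
    x ^ (2 ^ m) = x ^ (2 ^ (m % n)) := by
  have h1 : 2 ^ m = (2 ^ n) ^ (m / n) * 2 ^ (m % n) := by
    rw [← pow_mul, ← pow_add]
    congr 1
    have := Nat.div_add_mod m n
    omega
  rw [h1, pow_mul, ← gf_card n hn]
  congr 1
  exact FiniteField.pow_card_pow _ _

noncomputable def frobAlg : GaloisField 2 n ≃ₐ[ZMod 2] GaloisField 2 n :=
  AlgEquiv.ofRingEquiv (f := frobeniusEquiv (GaloisField 2 n) 2)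
    (fun r => by
      show frobenius (GaloisField 2 n) 2 _ = _
      rw [frobenius_def, ← map_pow, ZMod.pow_card])

lemma frobAlg_pow (k : ℕ) (x : GaloisField 2 n) : ((frobAlg n) ^ k) x = x ^ (2 ^ k) := by
  induction k generalizing x with
  | zero => simp
  | succ k ih =>
    rw [pow_succ, AlgEquiv.mul_apply]
    show ((frobAlg n) ^ k) (frobenius (GaloisField 2 n) 2 x) = _
    rw [frobenius_def, ih (x ^ 2), ← pow_mul, ← pow_succ']

lemma frobAlg_pow_injOn (hn : 0 < n) :
    Function.Injective (fun k : Fin n => (frobAlg n) ^ (k : ℕ)) := by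
  have key : ∀ a b : Fin n, (a : ℕ) < (b : ℕ) →
      (frobAlg n) ^ (a : ℕ) ≠ (frobAlg n) ^ (b : ℕ) := by
    intro a b hab he
    have heval : ∀ x : GaloisField 2 n, x ^ (2 ^ (b : ℕ)) - x ^ (2 ^ (a : ℕ)) = 0 := by
      intro x
      rw [← frobAlg_pow, ← frobAlg_pow, ← he, sub_self]
    set P : (GaloisField 2 n)[X] := X ^ (2 ^ (b : ℕ)) - X ^ (2 ^ (a : ℕ)) with hP
    have hPz : P = 0 := by
      apply Polynomial.eq_zero_of_natDegree_lt_card_of_eval_eq_zero' P Finset.univ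
      · intro x _
        simp [hP, heval x]
      · calc P.natDegree ≤ max (X ^ (2 ^ (b : ℕ)) : (GaloisField 2 n)[X]).natDegree
              (X ^ (2 ^ (a : ℕ)) : (GaloisField 2 n)[X]).natDegree := natDegree_sub_le _ _
          _ < Finset.univ.card := by
              rw [natDegree_X_pow, natDegree_X_pow, Finset.card_univ, gf_card n hn]
              have h1 : 2 ^ (b : ℕ) < 2 ^ n := Nat.pow_lt_pow_right (by norm_num) b.isLt
              have h2 : 2 ^ (a : ℕ) < 2 ^ n := Nat.pow_lt_pow_right (by norm_num) a.isLt
              omega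
    have hco := congrArg (fun Q => Polynomial.coeff Q (2 ^ (b : ℕ))) hPz
    have hne : ¬(2 ^ (b : ℕ) = 2 ^ (a : ℕ)) := by
      intro hc
      have := Nat.pow_right_injective (le_refl 2) hc
      omega
    simp [hP, Polynomial.coeff_X_pow, hne] at hco
  intro a b he
  rcases lt_trichotomy (a : ℕ) (b : ℕ) with h | h | h
  · exact absurd he (key a b h)
  · exact Fin.ext h
  · exact absurd he.symm (key b a h)

lemma trace_eq_sum_pow (hn : 0 < n) (x : GaloisField 2 n) :
    algebraMap (ZMod 2) (GaloisField 2 n) (Algebra.trace (ZMod 2) (GaloisField 2 n) x)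
      = ∑ k ∈ Finset.range n, x ^ (2 ^ k) := by
  rw [trace_eq_sum_automorphisms]
  have hbij : Function.Bijective (fun k : Fin n => (frobAlg n) ^ (k : ℕ)) := by
    rw [Fintype.bijective_iff_injective_and_card]
    refine ⟨frobAlg_pow_injOn n hn, ?_⟩
    rw [Fintype.card_fin, ← Nat.card_eq_fintype_card, IsGalois.card_aut_eq_finrank, GaloisField.finrank 2 (by omega)]
  rw [← Function.Bijective.sum_comp hbij (fun σ => σ x)]
  rw [← Fin.sum_univ_eq_sum_range (fun k => x ^ (2 ^ k)) n]
  exact Finset.sum_congr rfl fun k _ => frobAlg_pow n k x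

lemma two_pow_inj_iff {A B : ℕ} : (2:ℕ) ^ A = 2 ^ B ↔ A = B :=
  ⟨fun h => Nat.pow_right_injective (le_refl 2) h, fun h => by rw [h]⟩

def expo (n i k : ℕ) : ℕ :=
  if i % n = 0 then 2 ^ ((k + 1) % n) else 2 ^ ((k + i % n) % n) + 2 ^ k

noncomputable def Ppoly (S : Finset ℕ) (n : ℕ) : Polynomial (ZMod 2) :=
  ∑ i ∈ S, ∑ k ∈ Finset.range n, (X : Polynomial (ZMod 2)) ^ (expo n i k)

lemma mod_add_ne {n r k : ℕ} (hr0 : 0 < r) (hrn : r < n) (hk : k < n) : (k + r) % n ≠ k := by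
  rw [addmod n k r hk hrn]
  split_ifs <;> omega

lemma two_pow_two_lt {a b m : ℕ} (ha : a < m) (hb : b < m) (hab : a ≠ b) :
    2 ^ a + 2 ^ b < 2 ^ m := by
  rcases Nat.lt_or_ge a b with h | h
  · have h1 : 2 ^ a < 2 ^ b := two_pow_lt_iff.mpr h
    have h2 : 2 ^ (b + 1) ≤ 2 ^ m := Nat.pow_le_pow_right (by norm_num) (by omega)
    have := two_pow_succ b
    omega
  · have hba : b < a := by omega
    have h1 : 2 ^ b < 2 ^ a := two_pow_lt_iff.mpr hba
    have h2 : 2 ^ (a + 1) ≤ 2 ^ m := Nat.pow_le_pow_right (by norm_num) (by omega)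
    have := two_pow_succ a
    omega

lemma expo_lt {n : ℕ} (hn : 0 < n) (i : ℕ) {k : ℕ} (hk : k < n) : expo n i k < 2 ^ n := by
  unfold expo
  split_ifs with h
  · exact two_pow_lt_iff.mpr (Nat.mod_lt _ hn)
  · exact two_pow_two_lt (Nat.mod_lt _ hn) hk
      (mod_add_ne (Nat.pos_of_ne_zero h) (Nat.mod_lt _ hn) hk)

lemma expo_small {n d : ℕ} (hd0 : 0 < d) (hdn : d < n) (k : ℕ) :
    expo n d k = 2 ^ ((k + d) % n) + 2 ^ k := by
  unfold expo
  rw [Nat.mod_eq_of_lt hdn, if_neg (by omega)]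

lemma aeval_Ppoly (S : Finset ℕ) {n : ℕ} (hn : 0 < n) (x : GaloisField 2 n) :
    algebraMap (ZMod 2) (GaloisField 2 n) (Qtr S n x) = Polynomial.aeval x (Ppoly S n) := by
  unfold Qtr Ppoly
  rw [map_sum (Algebra.trace (ZMod 2) (GaloisField 2 n)), map_sum, map_sum (Polynomial.aeval x)]
  refine Finset.sum_congr rfl fun i _ => ?_
  rw [trace_eq_sum_pow n hn, map_sum (Polynomial.aeval x)]
  refine Finset.sum_congr rfl fun k hk => ?_
  have hk' := Finset.mem_range.mp hk
  rw [map_pow, Polynomial.aeval_X, ← pow_mul]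
  have hexp : (2 ^ i + 1) * 2 ^ k = 2 ^ (i + k) + 2 ^ k := by
    rw [add_mul, one_mul, ← pow_add]
  rw [hexp, pow_add, gf_pow_reduce n hn x (i + k)]
  unfold expo
  split_ifs with h
  · have h1 : (i + k) % n = k := by
      rw [Nat.add_mod, h, zero_add, Nat.mod_mod_of_dvd k (dvd_refl n), Nat.mod_eq_of_lt hk']
    rw [h1, ← pow_add, ← two_pow_succ, gf_pow_reduce n hn x (k + 1)]
  · have h1 : (i + k) % n = (k + i % n) % n := by
      rw [Nat.add_mod, Nat.mod_eq_of_lt hk', Nat.add_comm (i % n) k]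
    rw [h1, ← pow_add]

lemma Qtr_vanish_iff (S : Finset ℕ) {n : ℕ} (hn : 0 < n) :
    (∀ x : GaloisField 2 n, Qtr S n x = 0) ↔ Ppoly S n = 0 := by
  have hinj := (algebraMap (ZMod 2) (GaloisField 2 n)).injective
  constructor
  · intro h
    have hdeg1 : (Ppoly S n).natDegree ≤ 2 ^ n - 1 := by
      unfold Ppoly
      apply Polynomial.natDegree_sum_le_of_forall_le
      intro i _
      apply Polynomial.natDegree_sum_le_of_forall_le
      intro k hk
      rw [Polynomial.natDegree_X_pow]
      have := expo_lt hn i (Finset.mem_range.mp hk)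
      omega
    have hmap : (Ppoly S n).map (algebraMap (ZMod 2) (GaloisField 2 n)) = 0 := by
      apply Polynomial.eq_zero_of_natDegree_lt_card_of_eval_eq_zero' _ Finset.univ
      · intro x _
        rw [Polynomial.eval_map, ← Polynomial.aeval_def, ← aeval_Ppoly S hn, h x, map_zero]
      · have hle : ((Ppoly S n).map (algebraMap (ZMod 2) (GaloisField 2 n))).natDegree
            ≤ (Ppoly S n).natDegree := Polynomial.natDegree_map_le
        rw [Finset.card_univ, gf_card n hn]
        have : 0 < 2 ^ n := pow_pos (by norm_num) n
        omega
    rwa [Polynomial.map_eq_zero_iff hinj] at hmap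
  · intro h x
    have h2 := aeval_Ppoly S hn x
    rw [h, map_zero] at h2
    apply hinj
    rw [h2, map_zero]

lemma coeff_Ppoly (S : Finset ℕ) (n m : ℕ) :
    (Ppoly S n).coeff m
      = ∑ i ∈ S, ∑ k ∈ Finset.range n, (if m = expo n i k then (1 : ZMod 2) else 0) := by
  unfold Ppoly
  rw [Polynomial.finset_sum_coeff]
  refine Finset.sum_congr rfl fun i _ => ?_
  rw [Polynomial.finset_sum_coeff]
  exact Finset.sum_congr rfl fun k _ => Polynomial.coeff_X_pow _ _

lemma mod_k1 {n k : ℕ} (hn : 0 < n) (hk : k < n) : ((k + 1) % n = 1 % n) ↔ k = 0 := by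
  rcases Nat.eq_or_lt_of_le hn with h1 | h1
  · constructor
    · intro _; omega
    · intro h; subst h; rfl
  · rw [addmod n k 1 hk h1, Nat.mod_eq_of_lt h1]
    split_ifs <;> omega

lemma cond_of_Ppoly (S : Finset ℕ) {n : ℕ} (hn : 0 < n) (h : Ppoly S n = 0) : Cond S n := by
  constructor
  · have hc := congrArg (fun Q => Polynomial.coeff Q (2 ^ (1 % n))) h
    simp only [Polynomial.coeff_zero] at hc
    rw [coeff_Ppoly] at hc
    rw [Finset.sum_congr rfl (fun i (_ : i ∈ S) => show
        (∑ k ∈ Finset.range n, if 2 ^ (1 % n) = expo n i k then (1:ZMod 2) else 0)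
          = if i % n = 0 then (1 : ZMod 2) else 0 from by
      by_cases h0 : i % n = 0
      · rw [if_pos h0]
        rw [Finset.sum_congr rfl (fun k hk => show
            (if 2 ^ (1 % n) = expo n i k then (1:ZMod 2) else 0)
              = if k = 0 then (1:ZMod 2) else 0 from by
          have hk' := Finset.mem_range.mp hk
          have hiff : (2 ^ (1 % n) = expo n i k) ↔ k = 0 := by
            unfold expo
            rw [if_pos h0, two_pow_inj_iff]
            exact (eq_comm.trans (mod_k1 hn hk'))
          simp only [hiff]),
          Finset.sum_ite_eq' (Finset.range n) 0]
        rw [if_pos (Finset.mem_range.mpr hn)]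
      · rw [if_neg h0]
        apply Finset.sum_eq_zero
        intro k hk
        have hk' := Finset.mem_range.mp hk
        have hexpo : expo n i k = 2 ^ ((k + i % n) % n) + 2 ^ k := by
          unfold expo
          rw [if_neg h0]
        rw [if_neg]
        rw [hexpo]
        intro he
        exact (two_pow_add_ne _ _ _
          (mod_add_ne (Nat.pos_of_ne_zero h0) (Nat.mod_lt _ hn) hk')) he.symm) ] at hc
    rw [sum_indicator_eq_cnt] at hc
    exact hc
  · intro d hd0 hdn
    by_cases hdd : n - d = d
    · rw [hdd]; exact zmod2_add_self _
    · have hc := congrArg (fun Q => Polynomial.coeff Q (2 ^ d + 1)) h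
      simp only [Polynomial.coeff_zero] at hc
      rw [coeff_Ppoly] at hc
      have hcond : ∀ i, ∀ k, k < n → ((2 ^ d + 1 = expo n i k) ↔
          (i % n ≠ 0 ∧ ((i % n = d ∧ k = 0) ∨ (i % n = n - d ∧ k = d)))) := by
        intro i k hk
        unfold expo
        split_ifs with h0
        · constructor
          · intro he
            exfalso
            rw [show (1:ℕ) = 2 ^ 0 from rfl] at he
            exact two_pow_add_ne d 0 _ (by omega) he
          · rintro ⟨hne, _⟩
            exact absurd h0 hne
        · have hr0 : 0 < i % n := Nat.pos_of_ne_zero h0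
          have hrn : i % n < n := Nat.mod_lt _ hn
          constructor
          · intro he
            refine ⟨h0, ?_⟩
            rw [show (1:ℕ) = 2 ^ 0 from rfl] at he
            rcases two_pow_add_inj (by omega : d ≠ 0) (mod_add_ne hr0 hrn hk) he with
              ⟨h1, h2⟩ | ⟨h1, h2⟩
            · -- d = (k + i%n)%n, 0 = k
              left
              have hk0 : k = 0 := h2.symm
              rw [hk0, zero_add, Nat.mod_eq_of_lt hrn] at h1
              exact ⟨h1.symm, hk0⟩
            · -- d = k, 0 = (k + i%n)%n
              right
              rw [addmod n k _ hk hrn] at h2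
              constructor
              · split_ifs at h2 <;> omega
              · omega
          · rintro ⟨_, ⟨h1, h2⟩ | ⟨h1, h2⟩⟩
            · rw [h2, h1, zero_add, Nat.mod_eq_of_lt hdn, pow_zero]
            · rw [h2, h1, show (d + (n - d)) % n = 0 by
                rw [show d + (n - d) = n by omega, Nat.mod_self], pow_zero]
              omega
      rw [Finset.sum_congr rfl (fun i (_ : i ∈ S) => show
          (∑ k ∈ Finset.range n, if 2 ^ d + 1 = expo n i k then (1:ZMod 2) else 0)
            = (if i % n = d then (1:ZMod 2) else 0)
              + (if i % n = n - d then (1:ZMod 2) else 0) from by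
        by_cases hr0 : i % n = 0
        · rw [if_neg (by omega), if_neg (by omega)]
          rw [add_zero]
          apply Finset.sum_eq_zero
          intro k hk
          rw [if_neg]
          rw [hcond i k (Finset.mem_range.mp hk)]
          rintro ⟨hne, _⟩
          exact hne hr0
        · by_cases hrd : i % n = d
          · rw [if_pos hrd, if_neg (by omega)]
            rw [Finset.sum_congr rfl (fun k hk => show
                (if 2 ^ d + 1 = expo n i k then (1:ZMod 2) else 0)
                  = if k = 0 then (1:ZMod 2) else 0 from by
              have hiff := hcond i k (Finset.mem_range.mp hk)
              simp only [hiff]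
              have : (i % n ≠ 0 ∧ ((i % n = d ∧ k = 0) ∨ (i % n = n - d ∧ k = d))) ↔ k = 0 := by
                constructor
                · rintro ⟨_, ⟨_, hk0⟩ | ⟨hnd, _⟩⟩
                  · exact hk0
                  · omega
                · intro hk0
                  exact ⟨hr0, Or.inl ⟨hrd, hk0⟩⟩
              simp only [this]),
              Finset.sum_ite_eq' (Finset.range n) 0]
            rw [if_pos (Finset.mem_range.mpr hn), add_zero]
          · by_cases hrnd : i % n = n - d
            · rw [if_neg hrd, if_pos hrnd]
              rw [Finset.sum_congr rfl (fun k hk => show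
                  (if 2 ^ d + 1 = expo n i k then (1:ZMod 2) else 0)
                    = if k = d then (1:ZMod 2) else 0 from by
                have hiff := hcond i k (Finset.mem_range.mp hk)
                simp only [hiff]
                have : (i % n ≠ 0 ∧ ((i % n = d ∧ k = 0) ∨ (i % n = n - d ∧ k = d))) ↔ k = d := by
                  constructor
                  · rintro ⟨_, ⟨hd', _⟩ | ⟨_, hkd⟩⟩
                    · omega
                    · exact hkd
                  · intro hkd
                    exact ⟨hr0, Or.inr ⟨hrnd, hkd⟩⟩
                simp only [this]),
                Finset.sum_ite_eq' (Finset.range n) d]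
              rw [if_pos (Finset.mem_range.mpr hdn), zero_add]
            · rw [if_neg hrd, if_neg hrnd, add_zero]
              apply Finset.sum_eq_zero
              intro k hk
              rw [if_neg]
              rw [hcond i k (Finset.mem_range.mp hk)]
              rintro ⟨_, ⟨h1, _⟩ | ⟨h1, _⟩⟩
              · exact hrd h1
              · exact hrnd h1)] at hc
      rw [Finset.sum_add_distrib, sum_indicator_eq_cnt, sum_indicator_eq_cnt] at hc
      exact hc

noncomputable def Vp (n d : ℕ) : Polynomial (ZMod 2) :=
  ∑ k ∈ Finset.range n, (X : Polynomial (ZMod 2)) ^ (expo n d k)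

lemma nsmul_poly (c : ℕ) (hc : (c : ZMod 2) = 0) (Q : Polynomial (ZMod 2)) : c • Q = 0 := by
  rw [nsmul_eq_mul]
  have h1 : ((c : ℕ) : Polynomial (ZMod 2)) = Polynomial.C ((c : ℕ) : ZMod 2) := by
    rw [map_natCast]
  rw [h1, hc, map_zero, zero_mul]

lemma poly_add_self (Q : Polynomial (ZMod 2)) : Q + Q = 0 := by
  rw [← two_nsmul]
  exact nsmul_poly 2 (by decide) Q

lemma Ppoly_grouped (S : Finset ℕ) {n : ℕ} (hn : 0 < n) :
    Ppoly S n = ∑ d ∈ Finset.range n, cnt S n d • Vp n d := by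
  rw [← sum_mod_group S hn (fun d => Vp n d)]
  refine Finset.sum_congr rfl fun i _ => ?_
  unfold Vp
  refine Finset.sum_congr rfl fun k _ => ?_
  congr 1
  unfold expo
  rw [Nat.mod_mod_of_dvd i (dvd_refl n)]

lemma Vp_pair {n d : ℕ} (hd0 : 0 < d) (hdn : d < n) : Vp n (n - d) = Vp n d := by
  unfold Vp
  have hnd0 : 0 < n - d := by omega
  have hndn : n - d < n := by omega
  refine Finset.sum_nbij' (i := fun k => (k + (n - d)) % n) (j := fun k => (k + d) % n)
    (fun k hk => Finset.mem_range.mpr (Nat.mod_lt _ (by omega)))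
    (fun k hk => Finset.mem_range.mpr (Nat.mod_lt _ (by omega)))
    (fun k hk => ?_) (fun k hk => ?_) (fun k hk => ?_)
  · have hk' := Finset.mem_range.mp hk
    show ((k + (n - d)) % n + d) % n = k
    rw [Nat.mod_add_mod, show k + (n - d) + d = k + n by omega, Nat.add_mod_right,
      Nat.mod_eq_of_lt hk']
  · have hk' := Finset.mem_range.mp hk
    show ((k + d) % n + (n - d)) % n = k
    rw [Nat.mod_add_mod, show k + d + (n - d) = k + n by omega, Nat.add_mod_right,
      Nat.mod_eq_of_lt hk']
  · have hk' := Finset.mem_range.mp hk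
    congr 1
    rw [expo_small hnd0 hndn, expo_small hd0 hdn]
    have h1 : ((k + (n - d)) % n + d) % n = k := by
      rw [Nat.mod_add_mod, show k + (n - d) + d = k + n by omega, Nat.add_mod_right,
        Nat.mod_eq_of_lt hk']
    rw [h1, Nat.add_comm]

lemma Vp_self {n d : ℕ} (hd0 : 0 < d) (hdd : d + d = n) : Vp n d = 0 := by
  have hdn : d < n := by omega
  unfold Vp
  apply Finset.sum_involution (fun k _ => (k + d) % n)
  · intro k hk
    have hk' := Finset.mem_range.mp hk
    have h1 : ((k + d) % n + d) % n = k := by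
      rw [Nat.mod_add_mod, show k + d + d = k + n by omega, Nat.add_mod_right,
        Nat.mod_eq_of_lt hk']
    rw [expo_small hd0 hdn, expo_small hd0 hdn, h1, Nat.add_comm (2 ^ ((k + d) % n)) (2 ^ k)]
    exact poly_add_self _
  · intro k hk _
    exact mod_add_ne hd0 hdn (Finset.mem_range.mp hk)
  · intro k hk
    exact Finset.mem_range.mpr (Nat.mod_lt _ (by omega))
  · intro k hk
    have hk' := Finset.mem_range.mp hk
    rw [Nat.mod_add_mod, show k + d + d = k + n by omega, Nat.add_mod_right,
      Nat.mod_eq_of_lt hk']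

lemma Ppoly_of_cond (S : Finset ℕ) {n : ℕ} (hn : 0 < n) (hc : Cond S n) : Ppoly S n = 0 := by
  obtain ⟨hc0, hcd⟩ := hc
  rw [Ppoly_grouped S hn]
  apply Finset.sum_involution (fun d _ => if d = 0 then 0 else n - d)
  · intro d hd
    have hdn := Finset.mem_range.mp hd
    by_cases h0 : d = 0
    · subst h0
      simp only [reduceIte]
      rw [nsmul_poly _ hc0, add_zero]
    · rw [if_neg h0]
      by_cases hdd : n - d = d
      · rw [hdd]
        exact poly_add_self _
      · rw [Vp_pair (by omega) hdn, ← add_nsmul]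
        exact nsmul_poly _ (by rw [Nat.cast_add, hcd d (by omega) hdn]) _
  · intro d hd hne
    have hdn := Finset.mem_range.mp hd
    by_cases h0 : d = 0
    · exact absurd (by subst h0; exact nsmul_poly _ hc0 _) hne
    · rw [if_neg h0]
      intro hdd
      exact hne (by rw [Vp_self (by omega) (by omega), smul_zero])
  · intro d hd
    have hdn := Finset.mem_range.mp hd
    by_cases h0 : d = 0 <;> simp [h0] <;> omega
  · intro d hd
    have hdn := Finset.mem_range.mp hd
    by_cases h0 : d = 0
    · simp [h0]
    · rw [if_neg h0, if_neg (by omega : ¬(n - d = 0))]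
      omega

lemma Q_iff (S : Finset ℕ) {n : ℕ} (hn : 0 < n) :
    (∀ x : GaloisField 2 n, Qtr S n x = 0) ↔ Cond S n := by
  rw [Qtr_vanish_iff S hn]
  exact ⟨cond_of_Ppoly S hn, Ppoly_of_cond S hn⟩

end Aux

/-- `Q_n` vanishes identically on `GaloisField 2 n` iff the associated rotation
symmetric Boolean function vanishes identically on `(Fin n → ZMod 2)`. -/
theorem trace_vanishes_iff_rs_vanishes (S : Finset ℕ) (hS : S.Nonempty)
    (hpos : ∀ i ∈ S, 1 ≤ i) (n : ℕ) (hn : 1 ≤ n) :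
    (∀ x : GaloisField 2 n, Qtr S n x = 0) ↔ (∀ x : Fin n → ZMod 2, rsB S n x = 0) := by
  exact (Q_iff S (by omega)).trans (B_iff S (by omega)).symm
end

section
/- Let S be a nonempty finite set of positive integers all of which are odd, let J = max S, let P(X) = ∑_{i∈S} (X^(J+i) + X^(J−i)) in (ZMod 2)[X], and let d_Q be the multiplicity of 1 as a root of P. Then d_Q ≡ 2 (mod 4). -/
open Polynomial

/-- reflect distributes over finite sums. -/
private lemma my_reflect_sum {R : Type*} [Semiring R] (N : ℕ) (s : Finset ℕ) (f : ℕ → R[X]) :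
    reflect N (∑ i ∈ s, f i) = ∑ i ∈ s, reflect N (f i) := by
  classical
  induction s using Finset.induction with
  | empty => simp [reflect_zero]
  | insert a s h ih =>
      rw [Finset.sum_insert h, Finset.sum_insert h, reflect_add, ih]

/-- reflect of (X+1)^e at level e is itself. -/
private lemma my_reflect_X_add_one_pow (e : ℕ) :
    reflect e ((X + 1 : (ZMod 2)[X]) ^ e) = (X + 1) ^ e := by
  induction e with
  | zero => simp [reflect_one]
  | succ n ih =>
      have h1 : ((X + 1 : (ZMod 2)[X])).natDegree ≤ 1 := by
        simpa using natDegree_X_add_C (1 : ZMod 2) |>.le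
      have hn : ((X + 1 : (ZMod 2)[X]) ^ n).natDegree ≤ n :=
        natDegree_pow_le.trans (by nlinarith [h1])
      have hrefl1 : reflect 1 (X + 1 : (ZMod 2)[X]) = X + 1 := by
        rw [reflect_add]
        have hX : reflect 1 (X : (ZMod 2)[X]) = 1 := reflect_one_X
        have h1' : reflect 1 (1 : (ZMod 2)[X]) = X := by
          rw [reflect_one]; simp
        rw [hX, h1', add_comm]
      have : (X + 1 : (ZMod 2)[X]) ^ (n + 1) = (X + 1) ^ n * (X + 1) := by ring
      rw [this, show n + 1 = n + 1 from rfl, reflect_mul _ _ hn h1, ih, hrefl1]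

/-- A palindromic polynomial over ZMod 2 of odd "degree" N has 1 as a root. -/
private lemma my_eval_one_eq_zero {N : ℕ} (hN : Odd N) (g : (ZMod 2)[X])
    (hdeg : g.natDegree ≤ N) (hg : reflect N g = g) : g.eval 1 = 0 := by
  have hlt : g.natDegree < N + 1 := Nat.lt_succ_of_le hdeg
  rw [eval_eq_sum_range' hlt]
  simp only [one_pow, mul_one]
  refine Finset.sum_involution (fun k _ => N - k) ?_ ?_ ?_ ?_
  · intro a ha
    have haN : a ≤ N := Nat.lt_succ_iff.mp (Finset.mem_range.mp ha)
    have hco : g.coeff (N - a) = g.coeff a := by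
      conv_rhs => rw [← hg]
      rw [coeff_reflect, revAt_le haN]
    show g.coeff a + g.coeff (N - a) = 0
    rw [hco]
    exact CharTwo.add_self_eq_zero _
  · intro a ha _
    have haN : a ≤ N := Nat.lt_succ_iff.mp (Finset.mem_range.mp ha)
    obtain ⟨k, hk⟩ := hN
    show N - a ≠ a
    omega
  · intro a ha
    have haN : a ≤ N := Nat.lt_succ_iff.mp (Finset.mem_range.mp ha)
    show N - a ∈ Finset.range (N + 1)
    exact Finset.mem_range.mpr (by omega)
  · intro a ha
    have haN : a ≤ N := Nat.lt_succ_iff.mp (Finset.mem_range.mp ha)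
    show N - (N - a) = a
    omega

/-- Key lemma: a nonzero palindromic polynomial over ZMod 2 of odd degree bound N
has odd root multiplicity at 1. -/
private lemma my_odd_rootMultiplicity {J : ℕ} (hJ : Odd J) (f : (ZMod 2)[X]) (hf : f ≠ 0)
    (hdeg : f.natDegree ≤ J) (hrefl : reflect J f = f) : Odd (f.rootMultiplicity 1) := by
  obtain ⟨g, hfg, hgnd⟩ := f.exists_eq_pow_rootMultiplicity_mul_and_not_dvd hf 1
  set e := f.rootMultiplicity 1 with he
  have hX1 : (X - C (1 : ZMod 2)) = X + 1 := by
    rw [map_one, sub_eq_add_neg, CharTwo.neg_eq]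
  rw [hX1] at hfg hgnd
  have hXne : (X + 1 : (ZMod 2)[X]) ≠ 0 := by
    rw [← hX1]; exact X_sub_C_ne_zero 1
  have hXpne : (X + 1 : (ZMod 2)[X]) ^ e ≠ 0 := pow_ne_zero _ hXne
  have hgne : g ≠ 0 := by
    rintro rfl; rw [mul_zero] at hfg; exact hf hfg
  have hdegX : ((X + 1 : (ZMod 2)[X]) ^ e).natDegree = e := by
    rw [natDegree_pow, ← hX1, natDegree_X_sub_C, mul_one]
  have hdegf : f.natDegree = e + g.natDegree := by
    rw [hfg, natDegree_mul hXpne hgne, hdegX]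
  have heJ : e ≤ J := by omega
  obtain ⟨m, hm⟩ : ∃ m, J = e + m := ⟨J - e, by omega⟩
  have hdegg : g.natDegree ≤ m := by omega
  have hreflg : reflect m g = g := by
    have h1 : reflect J f = (X + 1) ^ e * reflect m g := by
      conv_lhs => rw [hfg, hm]
      rw [reflect_mul _ _ (le_of_eq hdegX) hdegg, my_reflect_X_add_one_pow]
    rw [hrefl, hfg] at h1
    exact (mul_left_cancel₀ hXpne h1).symm
  have hg1 : g.eval 1 ≠ 0 := by
    intro h
    apply hgnd
    rw [← hX1]
    exact dvd_iff_isRoot.mpr h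
  by_contra hodd
  have heven : Even e := Nat.not_odd_iff_even.mp hodd
  have hJe : Odd m := by
    obtain ⟨k, hk⟩ := hJ
    obtain ⟨l, hl⟩ := heven
    exact ⟨k - l, by omega⟩
  exact hg1 (my_eval_one_eq_zero hJe g hdegg hreflg)

/-- If all elements of `S` are odd, the multiplicity `d_Q` of the root `1` of
`P(X) = ∑_{i∈S}(X^(J+i) + X^(J-i))` over `ZMod 2` satisfies `d_Q ≡ 2 (mod 4)`. -/
theorem root_multiplicity_two_mod_four (S : Finset ℕ) (hS : S.Nonempty)
    (hpos : ∀ i ∈ S, 1 ≤ i) (hOdd : ∀ i ∈ S, Odd i) (J : ℕ) (hJ : J = S.max' hS)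
    (P : (ZMod 2)[X])
    (hP : P = ∑ i ∈ S, ((X : (ZMod 2)[X]) ^ (J + i) + (X : (ZMod 2)[X]) ^ (J - i)))
    (dQ : ℕ) (hd : dQ = P.rootMultiplicity 1) :
    dQ % 4 = 2 := by
  classical
  have hJS : J ∈ S := hJ ▸ S.max'_mem hS
  have hJodd : Odd J := hOdd J hJS
  have hJ1 : 1 ≤ J := hpos J hJS
  have hle : ∀ i ∈ S, i ≤ J := fun i hi => hJ ▸ S.le_max' i hi
  -- the "square root" polynomial
  set P₁ : (ZMod 2)[X] :=
    ∑ i ∈ S, ((X : (ZMod 2)[X]) ^ ((J + i) / 2) + (X : (ZMod 2)[X]) ^ ((J - i) / 2)) with hP₁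
  -- arithmetic facts
  have harith : ∀ i ∈ S, 2 * ((J + i) / 2) = J + i ∧ 2 * ((J - i) / 2) = J - i := by
    intro i hi
    have hiodd := hOdd i hi
    have h1 : Even (J + i) := hJodd.add_odd hiodd
    have h2 : Even (J - i) := Nat.Odd.sub_odd hJodd hiodd
    exact ⟨Nat.two_mul_div_two_of_even h1, Nat.two_mul_div_two_of_even h2⟩
  -- P = P₁ ^ 2
  have hsq : P = P₁ * P₁ := by
    have : P₁ ^ 2 = ∑ i ∈ S,
        ((X : (ZMod 2)[X]) ^ ((J + i) / 2) + (X : (ZMod 2)[X]) ^ ((J - i) / 2)) ^ 2 :=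
      sum_pow_char 2 S _
    rw [hP, ← sq, this]
    refine Finset.sum_congr rfl fun i hi => ?_
    obtain ⟨h1, h2⟩ := harith i hi
    rw [add_pow_char, ← pow_mul, ← pow_mul]
    rw [show (J + i) / 2 * 2 = J + i by omega, show (J - i) / 2 * 2 = J - i by omega]
  -- P₁ ≠ 0
  have hcoeff0 : P₁.coeff 0 = 1 := by
    rw [hP₁, finset_sum_coeff]
    have : ∀ i ∈ S,
        ((X : (ZMod 2)[X]) ^ ((J + i) / 2) + (X : (ZMod 2)[X]) ^ ((J - i) / 2)).coeff 0
          = if i = J then 1 else 0 := by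
      intro i hi
      obtain ⟨h1, h2⟩ := harith i hi
      have hi1 := hpos i hi
      have hiJ := hle i hi
      rw [coeff_add, coeff_X_pow, coeff_X_pow]
      have hA : ¬ ((0 : ℕ) = (J + i) / 2) := by omega
      by_cases h : i = J
      · have hB : (0 : ℕ) = (J - i) / 2 := by omega
        rw [if_neg hA, if_pos hB, if_pos h, zero_add]
      · have hB : ¬ ((0 : ℕ) = (J - i) / 2) := by omega
        rw [if_neg hA, if_neg hB, if_neg h, zero_add]
    rw [Finset.sum_congr rfl this, Finset.sum_ite_eq' S J (fun _ => (1 : ZMod 2))]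
    simp [hJS]
  have hne : P₁ ≠ 0 := fun h => by simp [h] at hcoeff0
  -- degree bound
  have hdeg : P₁.natDegree ≤ J := by
    rw [hP₁]
    refine natDegree_sum_le_of_forall_le S _ fun i hi => ?_
    obtain ⟨h1, h2⟩ := harith i hi
    have hiJ := hle i hi
    refine (natDegree_add_le _ _).trans ?_
    rw [natDegree_X_pow, natDegree_X_pow]
    omega
  -- palindromicity
  have hrefl : reflect J P₁ = P₁ := by
    rw [hP₁, my_reflect_sum]
    have : ∀ i ∈ S,
        reflect J ((X : (ZMod 2)[X]) ^ ((J + i) / 2) + (X : (ZMod 2)[X]) ^ ((J - i) / 2))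
          = (X : (ZMod 2)[X]) ^ ((J + i) / 2) + (X : (ZMod 2)[X]) ^ ((J - i) / 2) := by
      intro i hi
      obtain ⟨h1, h2⟩ := harith i hi
      have hiJ := hle i hi
      rw [reflect_add, reflect_monomial, reflect_monomial,
        revAt_le (by omega : (J + i) / 2 ≤ J), revAt_le (by omega : (J - i) / 2 ≤ J),
        show J - (J + i) / 2 = (J - i) / 2 by omega,
        show J - (J - i) / 2 = (J + i) / 2 by omega, add_comm]
    exact Finset.sum_congr rfl this
  -- conclude
  have hoddm : Odd (P₁.rootMultiplicity 1) := my_odd_rootMultiplicity hJodd P₁ hne hdeg hrefl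
  have hmul : P.rootMultiplicity 1 = P₁.rootMultiplicity 1 + P₁.rootMultiplicity 1 := by
    rw [hsq]
    exact rootMultiplicity_mul (by rw [← hsq]; rw [hsq]; exact mul_ne_zero hne hne)
  obtain ⟨k, hk⟩ := hoddm
  omega
end
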